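/- arXiv:1601.02083 — 7 statements merged into one kernel-verified Lean document; each statement's English description precedes it below -/
import Mathlib

section
/- For vertex operators X_B(α) = exp(Σ_{n odd} x_n α^n) exp(-2 Σ_{n odd} (∂_{x_n}/n) α^{-n}) acting on formal power series in x = (x_1, x_3, x_5, ...), and for |α| > |β|, one has X_B(α) X_B(β) = ((1-β/α)/(1+β/α)) · exp(Σ_{n odd} x_n(α^n+β^n)) · exp(-2 Σ_{n odd} (∂_{x_n}/n)(α^{-n}+β^{-n})) as operators. -/
/-- `oddSum x t = Σ_{n odd} x_n t^n`. -/
noncomputable def oddSum (x : ℕ → ℝ) (t : ℝ) : ℝ :=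
  ∑' n : ℕ, if Odd n then x n * t ^ n else 0

/-- The shift `x ↦ x - 2[α^{-1}]_o`, i.e. `x_n ↦ x_n - 2 α^{-n}/n` for odd `n`,
which realizes the action of the operator `exp(-2 Σ_{n odd} (∂_{x_n}/n) α^{-n})`. -/
noncomputable def shiftv (α : ℝ) (x : ℕ → ℝ) : ℕ → ℝ :=
  fun n => if Odd n then x n - 2 * α⁻¹ ^ n / n else x n

/-- The BKP vertex operator
`X_B(α) = exp(Σ_{n odd} x_n α^n) exp(-2 Σ_{n odd} (∂_{x_n}/n) α^{-n})`. -/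
noncomputable def XB (α : ℝ) (f : (ℕ → ℝ) → ℝ) : (ℕ → ℝ) → ℝ :=
  fun x => Real.exp (oddSum x α) * f (shiftv α x)

private lemma odd_log_series {t : ℝ} (ht : |t| < 1) :
    HasSum (fun n : ℕ => if Odd n then t ^ n / n else 0)
      ((Real.log (1 + t) - Real.log (1 - t)) / 2) := by
  have h := (Real.hasSum_log_sub_log_of_abs_lt_one ht).div_const 2
  have hi : Function.Injective (fun k : ℕ => 2 * k + 1) := by
    intro a b hab; simp only [] at hab; omega
  have hz : ∀ n ∉ Set.range (fun k : ℕ => 2 * k + 1),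
      (if Odd n then t ^ n / (n:ℝ) else 0) = 0 := by
    intro n hn
    have : ¬ Odd n := by
      simp only [Set.mem_range, not_exists] at hn
      rintro ⟨k, rfl⟩
      exact hn k rfl
    simp [this]
  refine (hi.hasSum_iff hz).mp ?_
  convert h using 2 with k
  · rfl
  simp only [Function.comp]
  rw [if_pos ⟨k, rfl⟩]
  push_cast
  ring

/-- Composition rule for vertex operators: for `|α| > |β|`,
`X_B(α) X_B(β) = ((1-β/α)/(1+β/α)) · exp(Σ_{n odd} x_n (α^n + β^n)) ·
exp(-2 Σ_{n odd} (∂_{x_n}/n)(α^{-n} + β^{-n}))`, where the composite shift operator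
acts by `x ↦ shiftv β (shiftv α x)`. -/
theorem stmt4 (α β : ℝ) (h : |β| < |α|) (f : (ℕ → ℝ) → ℝ) (x : ℕ → ℝ)
    (hsa : Summable fun n : ℕ => if Odd n then x n * α ^ n else 0)
    (hsb : Summable fun n : ℕ => if Odd n then x n * β ^ n else 0) :
    XB α (XB β f) x =
      (1 - β / α) / (1 + β / α) * Real.exp (oddSum x α + oddSum x β)
        * f (shiftv β (shiftv α x)) := by
  have hα : α ≠ 0 := by
    intro h0
    rw [h0, abs_zero] at h
    exact absurd h (not_lt.mpr (abs_nonneg β))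
  set t : ℝ := β / α with htdef
  have ht : |t| < 1 := by
    rw [htdef, abs_div, div_lt_one (lt_of_le_of_lt (abs_nonneg β) h)]
    exact h
  have ht1 := abs_lt.mp ht
  have h1t : (0:ℝ) < 1 - t := by linarith
  have h1t' : (0:ℝ) < 1 + t := by linarith
  -- the key series computation
  have hS := odd_log_series ht
  have hS2 := hS.mul_left 2
  have hkey : HasSum (fun n : ℕ => if Odd n then shiftv α x n * β ^ n else 0)
      (oddSum x β - 2 * ((Real.log (1 + t) - Real.log (1 - t)) / 2)) := by
    have := hsb.hasSum.sub hS2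
    convert this using 1
    · rfl
    funext n
    by_cases hn : Odd n
    · simp only [hn, if_pos, shiftv]
      have : α⁻¹ ^ n * β ^ n = t ^ n := by
        rw [htdef, div_pow, div_eq_mul_inv, mul_comm, ← inv_pow]
      rw [sub_mul, div_mul_eq_mul_div, mul_assoc, this, mul_div_assoc]
    · simp [hn]
    rfl
  have hodd : oddSum (shiftv α x) β = oddSum x β + Real.log ((1 - t) / (1 + t)) := by
    rw [oddSum, hkey.tsum_eq, Real.log_div h1t.ne' h1t'.ne']
    ring
  have hr : Real.exp (Real.log ((1 - t) / (1 + t))) = (1 - t) / (1 + t) :=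
    Real.exp_log (div_pos h1t h1t')
  simp only [XB]
  rw [hodd, Real.exp_add, Real.exp_add, hr]
  ring
end

section
/- Applying the product of vertex operators to the constant function 1 gives X_B(α_1) ··· X_B(α_{2n}) · 1 = (∏_{i<j} (α_i - α_j)/(α_i + α_j)) · exp(Σ_{i=1}^{2n} Σ_{k odd} x_k α_i^k), valid for |α_1| > ··· > |α_{2n}|. -/
lemma hasSum_oddlog {t : ℝ} (h : |t| < 1) :
    HasSum (fun k : ℕ => if Odd k then 2 / (k : ℝ) * t ^ k else 0)
      (Real.log (1 + t) - Real.log (1 - t)) := by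
  have hinj : Function.Injective (fun k : ℕ => 2 * k + 1) := by
    intro a b hab; dsimp only at hab; omega
  have h0 : ∀ m, m ∉ Set.range (fun k : ℕ => 2 * k + 1) →
      (if Odd m then 2 / (m : ℝ) * t ^ m else 0) = 0 := by
    intro m hm
    rw [if_neg]
    rintro ⟨k, hk⟩
    exact hm ⟨k, show 2 * k + 1 = m by omega⟩
  rw [← hinj.hasSum_iff h0]
  have H := Real.hasSum_log_sub_log_of_abs_lt_one h
  convert H using 1
  funext k
  have hodd : Odd (2 * k + 1) := ⟨k, rfl⟩
  simp only [Function.comp, if_pos hodd]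
  push_cast
  ring

lemma shift_eq (x : ℕ → ℝ) {a b : ℝ} (ha : a ≠ 0) :
    (fun k : ℕ => if Odd k then shiftv a x k * b ^ k else 0) =
      fun k : ℕ => (if Odd k then x k * b ^ k else 0)
        - (if Odd k then 2 / (k : ℝ) * (b / a) ^ k else 0) := by
  funext k
  by_cases hk : Odd k
  · have hk0 : (k : ℝ) ≠ 0 := by
      have := hk.pos; positivity
    simp only [shiftv, if_pos hk]
    rw [div_pow]
    field_simp
    have hak : (1 / a) ^ k * a ^ k = 1 := by
      rw [one_div_pow, one_div_mul_cancel (pow_ne_zero k ha)]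
    linear_combination (-2 * b ^ k) * hak
  · simp [hk]

lemma abs_div_lt_one {a b : ℝ} (hab : |b| < |a|) : |b / a| < 1 := by
  have ha : (0:ℝ) < |a| := lt_of_le_of_lt (abs_nonneg b) hab
  rw [abs_div, div_lt_one ha]
  exact hab

lemma summable_shiftv (x : ℕ → ℝ) {a b : ℝ} (hab : |b| < |a|)
    (hs : Summable fun k : ℕ => if Odd k then x k * b ^ k else 0) :
    Summable fun k : ℕ => if Odd k then shiftv a x k * b ^ k else 0 := by
  have ha : a ≠ 0 := by
    intro h; rw [h, abs_zero] at hab; exact absurd hab (not_lt.2 (abs_nonneg b))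
  rw [shift_eq x ha]
  exact hs.sub (hasSum_oddlog (abs_div_lt_one hab)).summable

lemma exp_oddSum_shiftv (x : ℕ → ℝ) {a b : ℝ} (hab : |b| < |a|)
    (hs : Summable fun k : ℕ => if Odd k then x k * b ^ k else 0) :
    Real.exp (oddSum (shiftv a x) b) = (a - b) / (a + b) * Real.exp (oddSum x b) := by
  have ha : a ≠ 0 := by
    intro h; rw [h, abs_zero] at hab; exact absurd hab (not_lt.2 (abs_nonneg b))
  have ht : |b / a| < 1 := abs_div_lt_one hab
  have H := hasSum_oddlog ht
  have h1 : oddSum (shiftv a x) b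
      = oddSum x b - (Real.log (1 + b / a) - Real.log (1 - b / a)) := by
    unfold oddSum
    rw [shift_eq x ha]
    exact (hs.hasSum.sub H).tsum_eq
  have htlt : b / a < 1 := lt_of_le_of_lt (le_abs_self _) ht
  have htgt : -1 < b / a := by
    have := neg_abs_le (b / a); linarith [abs_lt.mp ht]
  have h1t : (0:ℝ) < 1 - b / a := by linarith
  have h2t : (0:ℝ) < 1 + b / a := by linarith
  have hab0 : a + b ≠ 0 := by
    intro h
    have : b = -a := by linarith
    rw [this, abs_neg] at hab; exact lt_irrefl _ hab
  have key2 : (1 - b / a) / (1 + b / a) = (a - b) / (a + b) := by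
    rw [div_eq_div_iff h2t.ne' hab0]
    field_simp
  rw [h1, Real.exp_sub, Real.exp_sub, Real.exp_log h2t, Real.exp_log h1t,
    div_eq_mul_inv, inv_div, key2]
  ring

/-- Pair product for a list. -/
noncomputable def pairProd : List ℝ → ℝ
  | [] => 1
  | a :: l => (l.map fun b => (a - b) / (a + b)).prod * pairProd l

lemma key (L : List ℝ) (x : ℕ → ℝ)
    (hL : L.Pairwise fun a b => |b| < |a|)
    (hs : ∀ a ∈ L, Summable fun k : ℕ => if Odd k then x k * a ^ k else 0) :
    L.foldr XB (fun _ => 1) x = pairProd L * Real.exp ((L.map (oddSum x)).sum) := by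
  induction L generalizing x with
  | nil => simp [pairProd]
  | cons a l ih =>
    rw [List.pairwise_cons] at hL
    obtain ⟨ha, hl⟩ := hL
    have hs' : ∀ b ∈ l, Summable fun k : ℕ => if Odd k then shiftv a x k * b ^ k else 0 :=
      fun b hb => summable_shiftv x (ha b hb) (hs b (List.mem_cons_of_mem a hb))
    have := ih (shiftv a x) hl hs'
    simp only [List.foldr_cons, XB] at this ⊢
    rw [this]
    have hexp : Real.exp ((l.map (oddSum (shiftv a x))).sum)
        = (l.map fun b => (a - b) / (a + b)).prod * Real.exp ((l.map (oddSum x)).sum) := by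
      rw [Real.exp_list_sum, Real.exp_list_sum, List.map_map, List.map_map]
      have : l.map (Real.exp ∘ oddSum (shiftv a x))
          = l.map fun b => (a - b) / (a + b) * (Real.exp ∘ oddSum x) b := by
        apply List.map_congr_left
        intro b hb
        exact exp_oddSum_shiftv x (ha b hb) (hs b (List.mem_cons_of_mem a hb))
      rw [this, List.prod_map_mul]
    rw [hexp, pairProd, List.map_cons, List.sum_cons, Real.exp_add]
    ring

lemma pairProd_ofFn : ∀ (m : ℕ) (α : Fin m → ℝ),
    pairProd (List.ofFn α)
      = ∏ i : Fin m, ∏ j : Fin m, if i < j then (α i - α j) / (α i + α j) else 1 := by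
  intro m
  induction m with
  | zero => intro α; simp [pairProd]
  | succ m ih =>
    intro α
    rw [List.ofFn_succ, pairProd, ih (fun i => α i.succ)]
    rw [Fin.prod_univ_succ]
    congr 1
    · rw [Fin.prod_univ_succ, if_neg (lt_irrefl _), one_mul]
      rw [List.map_ofFn, List.prod_ofFn]
      apply Finset.prod_congr rfl
      intro j _
      rw [if_pos (Fin.succ_pos j)]
      rfl
    · apply Finset.prod_congr rfl
      intro i _
      rw [Fin.prod_univ_succ]
      have h0 : ¬ (i.succ < (0 : Fin (m + 1))) := by
        exact not_lt.2 (Fin.zero_le _)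
      rw [if_neg h0, one_mul]
      apply Finset.prod_congr rfl
      intro j _
      simp only [Fin.succ_lt_succ_iff]

/-- Applying a product of `2n` vertex operators to the constant function `1`:
for `|α_1| > ⋯ > |α_{2n}|`,
`X_B(α_1) ⋯ X_B(α_{2n}) · 1
  = (∏_{i<j} (α_i-α_j)/(α_i+α_j)) · exp(Σ_{i=1}^{2n} Σ_{k odd} x_k α_i^k)`. -/
theorem stmt5 (n : ℕ) (α : Fin (2*n) → ℝ)
    (hmono : ∀ i j : Fin (2*n), i < j → |α j| < |α i|) (x : ℕ → ℝ)
    (hsum : ∀ i, Summable fun k : ℕ => if Odd k then x k * α i ^ k else 0) :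
    ((List.ofFn α).foldr XB (fun _ => 1)) x =
      (∏ i : Fin (2*n), ∏ j : Fin (2*n), if i < j then (α i - α j) / (α i + α j) else 1)
        * Real.exp (∑ i : Fin (2*n), oddSum x (α i)) := by
  rw [key (List.ofFn α) x (List.pairwise_ofFn.2 fun i j h => hmono i j h)
    (by
      intro a hamem
      rw [List.mem_ofFn] at hamem
      obtain ⟨i, rfl⟩ := hamem
      exact hsum i)]
  rw [pairProd_ofFn, List.map_ofFn, List.sum_ofFn]
  rfl
end

section
/- Let λ = (λ_1 > ··· > λ_{2L-1} ≥ 1) be a strict partition and μ = (μ_1 > ··· > μ_{2L-1} ≥ 1) a strict partition with |μ| ≤ |λ| and μ ≠ λ. Define the pairing (Λ^{(i)}, Λ^{(j)}) = 0 and suppose (Λ^{(j)}, m) = 0 whenever m < λ_j. Then the Pfaffian (Λ^{(1)},...,Λ^{(2L-1)}, μ_1,...,μ_{2L-1}) = 0. -/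
/-- Pfaffian of a skew-symmetric array of pairings on a list, via first-row expansion. -/
noncomputable def pfL {R : Type*} [CommRing R] {σ : Type*} (a : σ → σ → R) : List σ → R
  | [] => 1
  | x :: xs => ∑ j : Fin xs.length,
      (-1 : R) ^ (j : ℕ) * a x (xs.get j) * pfL a (xs.eraseIdx j)
termination_by l => l.length
decreasing_by
  simp only [List.length_cons]
  have h1 : (xs.eraseIdx j).length ≤ xs.length := List.length_eraseIdx_le ..
  omega

lemma pfL_cons {R : Type*} [CommRing R] {σ : Type*} (a : σ → σ → R) (x : σ) (xs : List σ) :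
    pfL a (x :: xs) = ∑ j : Fin xs.length,
      (-1 : R) ^ (j : ℕ) * a x (xs.get j) * pfL a (xs.eraseIdx j) := by
  rw [pfL]

lemma mapEraseIdx {α β : Type*} (f : α → β) : ∀ (l : List α) (k : ℕ),
    (l.eraseIdx k).map f = (l.map f).eraseIdx k
  | [], _ => by simp
  | x :: xs, 0 => by simp
  | x :: xs, (k+1) => by simp [List.eraseIdx_cons_succ, mapEraseIdx f xs k]

lemma sumEraseIdx : ∀ (l : List ℕ) (k : ℕ) (h : k < l.length),
    l.sum = l[k] + (l.eraseIdx k).sum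
  | x :: xs, 0, _ => by simp
  | x :: xs, (k+1), h => by
    simp only [List.length_cons] at h
    have := sumEraseIdx xs k (by omega)
    simp only [List.eraseIdx_cons_succ, List.sum_cons, List.getElem_cons_succ]; omega

lemma keyArith (lamt : List ℕ) (l0 : ℕ) (mu : List ℕ) (k : ℕ) (hk : k < mu.length)
    (hlen : mu.length = lamt.length + 1)
    (hs1 : (l0 :: lamt).Pairwise (· > ·)) (hs2 : mu.Pairwise (· > ·))
    (hsum : mu.sum ≤ l0 + lamt.sum) (hne : mu ≠ l0 :: lamt)
    (hge : l0 ≤ mu[k]) :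
    (mu.eraseIdx k).sum ≤ lamt.sum ∧ mu.eraseIdx k ≠ lamt := by
  have hdec := sumEraseIdx mu k hk
  constructor
  · omega
  · intro heq
    subst heq
    have hsume : (mu.eraseIdx k).sum = (mu.eraseIdx k).sum := rfl
    have hkl : mu[k] = l0 := by omega
    rcases Nat.eq_zero_or_pos k with hk0 | hk0
    · subst hk0
      apply hne
      cases mu with
      | nil => simp at hk
      | cons m ms =>
        simp only [List.getElem_cons_zero] at hkl
        simp only [List.eraseIdx_cons_zero]
        rw [hkl]
    · have hlt2 : mu.length ≥ 2 := by omega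
      have hel : (mu.eraseIdx k).length = mu.length - 1 := List.length_eraseIdx_of_lt hk
      have h0k : mu[0] > mu[k] := by
        have := hs2.rel_get_of_lt (a := ⟨0, by omega⟩) (b := ⟨k, hk⟩)
          (by simp [Fin.lt_def]; omega)
        simpa using this
      have he0 : (mu.eraseIdx k)[0]'(by omega) = mu[0]'(by omega) :=
        List.getElem_eraseIdx_of_lt _ hk0
      have : l0 > (mu.eraseIdx k)[0]'(by omega) := by
        rcases hs1 with _ | ⟨hrel, _⟩
        exact hrel _ (List.getElem_mem _)
      omega

lemma genVanish {R : Type*} [CommRing R] {σ : Type*} (a : σ → σ → R) :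
    ∀ (l1 l2 : List (σ × ℕ)),
    l1.length = l2.length →
    (∀ x ∈ l1, ∀ y ∈ l1, a x.1 y.1 = 0) →
    (∀ x ∈ l1, ∀ y ∈ l2, y.2 < x.2 → a x.1 y.1 = 0) →
    (l1.map Prod.snd).Pairwise (· > ·) →
    (l2.map Prod.snd).Pairwise (· > ·) →
    (l2.map Prod.snd).sum ≤ (l1.map Prod.snd).sum →
    l2.map Prod.snd ≠ l1.map Prod.snd →
    pfL a (l1.map Prod.fst ++ l2.map Prod.fst) = 0
  | [], l2, hlen, _, _, _, _, _, hne => by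
    have : l2 = [] := List.length_eq_zero_iff.mp hlen.symm
    subst this; simp at hne
  | p :: t, l2, hlen, h11, h12, hs1, hs2, hsum, hne => by
    have hstep : (p :: t).map Prod.fst ++ l2.map Prod.fst
        = p.1 :: (t.map Prod.fst ++ l2.map Prod.fst) := by simp
    rw [hstep, pfL_cons]
    apply Finset.sum_eq_zero
    intro j _
    have hxslen : (t.map Prod.fst ++ l2.map Prod.fst).length = t.length + l2.length := by simp
    rcases lt_or_ge (j : ℕ) t.length with hj | hj
    · have hget : (t.map Prod.fst ++ l2.map Prod.fst).get j = (t.get ⟨j, hj⟩).1 := by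
        simp only [List.get_eq_getElem]
        rw [List.getElem_append_left (by simpa using hj)]
        simp
      have hz : a p.1 ((t.map Prod.fst ++ l2.map Prod.fst).get j) = 0 := by
        rw [hget]
        exact h11 p (by simp) (t.get ⟨j, hj⟩) (by simp [List.get_mem])
      rw [hz]; ring
    · have hk : (j : ℕ) - t.length < l2.length := by
        have h2 := j.isLt
        simp only [List.length_append, List.length_map] at h2
        omega
      have hget : (t.map Prod.fst ++ l2.map Prod.fst).get j
          = (l2.get ⟨(j : ℕ) - t.length, hk⟩).1 := by
        simp only [List.get_eq_getElem]
        rw [List.getElem_append_right (by simpa using hj)]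
        simp
      rcases lt_or_ge (l2.get ⟨(j : ℕ) - t.length, hk⟩).2 p.2 with hlt | hge
      · have hz : a p.1 ((t.map Prod.fst ++ l2.map Prod.fst).get j) = 0 := by
          rw [hget]
          exact h12 p (by simp) _ (by simp [List.get_mem]) hlt
        rw [hz]; ring
      · have herase : (t.map Prod.fst ++ l2.map Prod.fst).eraseIdx (j : ℕ)
            = t.map Prod.fst ++ (l2.eraseIdx ((j : ℕ) - t.length)).map Prod.fst := by
          rw [List.eraseIdx_append_of_length_le (by simpa using hj), mapEraseIdx]
          congr 2
          simp
        have hlen2 : t.length = (l2.eraseIdx ((j : ℕ) - t.length)).length := by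
          rw [List.length_eraseIdx_of_lt hk]
          simp only [List.length_cons] at hlen; omega
        have hsub : List.Sublist (l2.eraseIdx ((j : ℕ) - t.length)) l2 := List.eraseIdx_sublist _ _
        have hkey := keyArith (t.map Prod.snd) p.2 (l2.map Prod.snd) ((j : ℕ) - t.length)
          (by simpa using hk) (by simp only [List.length_map]; simp only [List.length_cons] at hlen; omega)
          (by simpa using hs1) hs2 (by simpa using hsum) (by simpa using hne)
          (by simpa using hge)
        have hzero := genVanish a t (l2.eraseIdx ((j : ℕ) - t.length)) hlen2
          (fun x hx y hy => h11 x (List.mem_cons_of_mem _ hx) y (List.mem_cons_of_mem _ hy))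
          (fun x hx y hy => h12 x (List.mem_cons_of_mem _ hx) y (hsub.mem hy))
          (List.Pairwise.of_cons (by simpa using hs1))
          (List.Pairwise.sublist (by rw [mapEraseIdx]; exact (List.eraseIdx_sublist _ _)) hs2)
          (by rw [mapEraseIdx]; simpa using hkey.1)
          (by rw [mapEraseIdx]; simpa using hkey.2)
        rw [herase, hzero]; ring
termination_by l1 => l1.length

/-- Let `λ = (λ_1 > ⋯ > λ_{2L-1} ≥ 1)` and `μ = (μ_1 > ⋯ > μ_{2L-1} ≥ 1)` be
strict partitions with `|μ| ≤ |λ|` and `μ ≠ λ`.  With a skew-symmetric pairing on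
the symbols `Λ^{(i)}` (encoded `Sum.inl i`) and positive integers (encoded
`Sum.inr n`) satisfying `(Λ^{(i)},Λ^{(j)}) = 0` and `(Λ^{(j)}, m) = 0` for
`m < λ_j`, the Pfaffian `(Λ^{(1)},…,Λ^{(2L-1)},μ_1,…,μ_{2L-1})` vanishes. -/
theorem stmt10 {R : Type*} [CommRing R] (L : ℕ) (hL : 1 ≤ L)
    (lam mu : Fin (2*L-1) → ℕ)
    (hlam : ∀ i j : Fin (2*L-1), i < j → lam j < lam i) (hlampos : ∀ i, 1 ≤ lam i)
    (hmu : ∀ i j : Fin (2*L-1), i < j → mu j < mu i) (hmupos : ∀ i, 1 ≤ mu i)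
    (hwt : ∑ i, mu i ≤ ∑ i, lam i) (hne : mu ≠ lam)
    (a : (Fin (2*L-1) ⊕ ℕ) → (Fin (2*L-1) ⊕ ℕ) → R)
    (hskew : ∀ X Y, a X Y = - a Y X)
    (hLL : ∀ i j : Fin (2*L-1), a (Sum.inl i) (Sum.inl j) = 0)
    (hvan : ∀ (j : Fin (2*L-1)) (m : ℕ), m < lam j → a (Sum.inl j) (Sum.inr m) = 0) :
    pfL a (List.ofFn (fun i : Fin (2*L-1) => Sum.inl i) ++
           List.ofFn (fun j : Fin (2*L-1) => Sum.inr (mu j))) = 0 := by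
  have h := genVanish a
    (List.ofFn (fun i : Fin (2*L-1) => (Sum.inl i, lam i)))
    (List.ofFn (fun j : Fin (2*L-1) => ((Sum.inr (mu j) : Fin (2*L-1) ⊕ ℕ), mu j)))
    (by simp)
    (by
      intro x hx y hy
      rw [List.mem_ofFn] at hx hy
      obtain ⟨i, rfl⟩ := hx; obtain ⟨j, rfl⟩ := hy
      exact hLL i j)
    (by
      intro x hx y hy hlt
      rw [List.mem_ofFn] at hx hy
      obtain ⟨i, rfl⟩ := hx; obtain ⟨j, rfl⟩ := hy
      exact hvan i _ hlt)
    (by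
      rw [List.map_ofFn, List.pairwise_ofFn]
      intro i j hij; exact hlam i j hij)
    (by
      rw [List.map_ofFn, List.pairwise_ofFn]
      intro i j hij; exact hmu i j hij)
    (by simpa [List.map_ofFn, List.sum_ofFn] using hwt)
    (by
      rw [List.map_ofFn, List.map_ofFn]
      simp only [ne_eq, List.ofFn_inj]
      intro h; apply hne; funext i; exact congrFun h i)
  rw [List.map_ofFn, List.map_ofFn] at h
  exact h
end

section
/- Suppose the coefficients {ξ_μ}, indexed skew-symmetrically by finite sequences of distinct non-negative integers (at most one zero entry), satisfy the even addition-formula relations: for all even k+l ≥ 4 and all permutations (n_1,...,n_l), (m_1,...,m_k) of strict partitions, ξ_{(n_1,...,n_l)} ξ_{(m_1,...,m_k)} = Σ_{i=1}^{l-1} (-1)^{k+i-1} ξ_{(n_i,n_l,m_1,...,m_k)} ξ_{(n_1,...,n̂_i,...,n_{l-1})} + Σ_{i=1}^{k} (-1)^{i-1} ξ_{(n_l,m_1,...,m̂_i,...,m_k)} ξ_{(n_1,...,n_{l-1},m_i)}. Then, specializing l = k+4 with n_1 = m_1, ..., n_k = m_k (and m_i ≠ 0, n_j ≠ 0), the DJKM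 relations hold: ξ_{(m_1,...,m_k)} ξ_{(m_1,...,m_k,n_1,n_2,n_3,n_4)} = ξ_{(m_1,...,m_k,n_1,n_4)} ξ_{(m_1,...,m_k,n_2,n_3)} - ξ_{(m_1,...,m_k,n_2,n_4)} ξ_{(m_1,...,m_k,n_1,n_3)} + ξ_{(m_1,...,m_k,n_3,n_4)} ξ_{(m_1,...,m_k,n_1,n_2)}. -/
/-- Suppose the coefficients `ξ`, indexed skew-symmetrically by finite sequences
of distinct non-negative integers, satisfy the even addition-formula relations
(eq. (224) of the paper): writing the first index sequence as `ns ++ [nl]` (so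
`n_l = nl`, `l = ns.length + 1`), for all even `k + l ≥ 4`,
`ξ_{(n_1,…,n_l)} ξ_{(m_1,…,m_k)}
 = Σ_{i=1}^{l-1} (-1)^{k+i-1} ξ_{(n_i,n_l,m_1,…,m_k)} ξ_{(n_1,…,n̂_i,…,n_{l-1})}
 + Σ_{i=1}^{k} (-1)^{i-1} ξ_{(n_l,m_1,…,m̂_i,…,m_k)} ξ_{(n_1,…,n_{l-1},m_i)}`.
Then the DJKM relations hold (with `k` even and all entries nonzero). -/
theorem stmt12 {R : Type*} [CommRing R] (ξ : List ℕ → R)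
    (hskew : ∀ (l1 l2 : List ℕ) (a b : ℕ), ξ (l1 ++ a :: b :: l2) = - ξ (l1 ++ b :: a :: l2))
    (hdup : ∀ l : List ℕ, ¬ l.Nodup → ξ l = 0)
    (H : ∀ (ns : List ℕ) (nl : ℕ) (ms : List ℕ),
      (ns ++ [nl]).Nodup → ms.Nodup → 1 ≤ ms.length →
      Even (ns.length + 1 + ms.length) → 4 ≤ ns.length + 1 + ms.length →
      ξ (ns ++ [nl]) * ξ ms =
        (∑ i : Fin ns.length,
          (-1 : R) ^ (ms.length + (i : ℕ)) * ξ (ns.get i :: nl :: ms) * ξ (ns.eraseIdx i))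
        + ∑ i : Fin ms.length,
          (-1 : R) ^ (i : ℕ) * ξ (nl :: ms.eraseIdx i) * ξ (ns ++ [ms.get i])) :
    ∀ (ms : List ℕ) (n1 n2 n3 n4 : ℕ), Even ms.length →
      (ms ++ [n1, n2, n3, n4]).Nodup →
      (∀ x ∈ ms ++ [n1, n2, n3, n4], x ≠ 0) →
      ξ ms * ξ (ms ++ [n1, n2, n3, n4]) =
        ξ (ms ++ [n1, n4]) * ξ (ms ++ [n2, n3])
        - ξ (ms ++ [n2, n4]) * ξ (ms ++ [n1, n3])
        + ξ (ms ++ [n3, n4]) * ξ (ms ++ [n1, n2]) := by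
  intro ms n1 n2 n3 n4 heven hnd _
  classical
  -- moving one element to the right across a list costs (-1)^length
  have moveOne : ∀ (L pre : List ℕ) (x : ℕ) (suf : List ℕ),
      ξ (pre ++ x :: (L ++ suf)) = (-1:R)^L.length * ξ ((pre ++ L) ++ x :: suf) := by
    intro L
    induction L with
    | nil => intro pre x suf; simp
    | cons a t ih =>
      intro pre x suf
      have h1 : ξ (pre ++ x :: a :: (t ++ suf)) = - ξ (pre ++ a :: x :: (t ++ suf)) :=
        hskew pre (t ++ suf) x a
      have h2 := ih (pre ++ [a]) x suf
      have e1 : pre ++ a :: x :: (t ++ suf) = (pre ++ [a]) ++ x :: (t ++ suf) := by simp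
      have e2 : (pre ++ [a]) ++ t = pre ++ a :: t := by simp
      calc ξ (pre ++ x :: (a :: t ++ suf)) = - ξ (pre ++ a :: x :: (t ++ suf)) := h1
        _ = - ((-1:R)^t.length * ξ (((pre ++ [a]) ++ t) ++ x :: suf)) := by rw [e1, h2]
        _ = (-1:R)^(a :: t).length * ξ ((pre ++ a :: t) ++ x :: suf) := by
              rw [e2, List.length_cons, pow_succ]; ring
  -- moving a pair of elements to the right across a list is free
  have moveTwo : ∀ (L : List ℕ) (x y : ℕ) (suf : List ℕ),
      ξ (x :: y :: (L ++ suf)) = ξ (L ++ x :: y :: suf) := by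
    intro L x y suf
    have h1 := moveOne L [x] y suf
    have h2 := moveOne L [] x (y :: suf)
    simp only [List.cons_append, List.nil_append, List.append_assoc,
      List.singleton_append] at h1 h2
    rw [h1, h2, ← mul_assoc, ← pow_add, Even.neg_one_pow ⟨L.length, rfl⟩, one_mul]
  -- moving one element across the even-length list `ms` is free
  have moveOneEven : ∀ (x : ℕ) (suf : List ℕ),
      ξ (x :: (ms ++ suf)) = ξ (ms ++ x :: suf) := by
    intro x suf
    have h := moveOne ms [] x suf
    simp only [List.nil_append] at h
    rw [h, heven.neg_one_pow, one_mul]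
  have hnd1 : ((ms ++ [n1]) ++ [n2]).Nodup := by
    refine List.Nodup.sublist ?_ hnd
    have h12 : List.Sublist [n1, n2] [n1, n2, n3, n4] :=
      List.Sublist.cons₂ _ (List.Sublist.cons₂ _ (List.nil_sublist _))
    simpa using h12.append_left ms
  have hnd2 : (ms ++ [n3, n4]).Nodup := by
    refine List.Nodup.sublist ?_ hnd
    have h34 : List.Sublist [n3, n4] [n1, n2, n3, n4] :=
      List.sublist_append_right [n1, n2] [n3, n4]
    exact h34.append_left ms
  have key := H (ms ++ [n1]) n2 (ms ++ [n3, n4]) hnd1 hnd2 (by simp)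
    (by refine ⟨ms.length + 2, ?_⟩; simp; try omega)
    (by simp; omega)
  -- the first sum
  have hS1 : (∑ i : Fin (ms ++ [n1]).length,
      (-1 : R) ^ ((ms ++ [n3, n4]).length + (i : ℕ)) *
        ξ ((ms ++ [n1]).get i :: n2 :: (ms ++ [n3, n4])) * ξ ((ms ++ [n1]).eraseIdx i))
      = ξ (n1 :: n2 :: (ms ++ [n3, n4])) * ξ ms := by
    have step1 : (∑ i : Fin (ms ++ [n1]).length,
        (-1 : R) ^ ((ms ++ [n3, n4]).length + (i : ℕ)) *
          ξ ((ms ++ [n1]).get i :: n2 :: (ms ++ [n3, n4])) * ξ ((ms ++ [n1]).eraseIdx i))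
        = ∑ i ∈ Finset.range (ms ++ [n1]).length,
          (-1 : R) ^ ((ms ++ [n3, n4]).length + i) *
            ξ ((ms ++ [n1]).getD i 0 :: n2 :: (ms ++ [n3, n4])) *
            ξ ((ms ++ [n1]).eraseIdx i) := by
      rw [← Fin.sum_univ_eq_sum_range]
      refine Finset.sum_congr rfl fun i _ => ?_
      rw [List.getD_eq_getElem _ _ i.isLt, List.get_eq_getElem]
    have hlen : (ms ++ [n1]).length = ms.length + 1 := by simp
    rw [step1, hlen, Finset.sum_range_succ]
    have hzero : ∀ i ∈ Finset.range ms.length,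
        (-1 : R) ^ ((ms ++ [n3, n4]).length + i) *
          ξ ((ms ++ [n1]).getD i 0 :: n2 :: (ms ++ [n3, n4])) *
          ξ ((ms ++ [n1]).eraseIdx i) = 0 := by
      intro i hi
      have hik : i < ms.length := Finset.mem_range.mp hi
      have ha : (ms ++ [n1]).getD i 0 = ms[i] := by
        rw [List.getD_eq_getElem _ _ (by simp; omega)]
        exact List.getElem_append_left (by omega)
      have hz : ξ ((ms ++ [n1]).getD i 0 :: n2 :: (ms ++ [n3, n4])) = 0 := by
        apply hdup
        intro hnodup
        exact (List.nodup_cons.mp hnodup).1 (by rw [ha]; simp)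
      rw [hz]; ring
    rw [Finset.sum_eq_zero hzero, zero_add]
    have hget : (ms ++ [n1]).getD ms.length 0 = n1 := by
      rw [List.getD_eq_getElem _ _ (by simp)]
      simp
    have herase : (ms ++ [n1]).eraseIdx ms.length = ms := by
      rw [List.eraseIdx_append_of_length_le (le_refl _)]
      simp
    have hsign : ((-1 : R)) ^ ((ms ++ [n3, n4]).length + ms.length) = 1 := by
      refine Even.neg_one_pow ?_
      simp only [List.length_append, List.length_cons, List.length_nil]
      exact ⟨ms.length + 1, by omega⟩
    rw [hget, herase, hsign, one_mul]
  -- the second sum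
  have hS2 : (∑ i : Fin (ms ++ [n3, n4]).length,
      (-1 : R) ^ (i : ℕ) * ξ (n2 :: (ms ++ [n3, n4]).eraseIdx i) *
        ξ ((ms ++ [n1]) ++ [(ms ++ [n3, n4]).get i]))
      = ξ (n2 :: (ms ++ [n4])) * ξ ((ms ++ [n1]) ++ [n3])
        - ξ (n2 :: (ms ++ [n3])) * ξ ((ms ++ [n1]) ++ [n4]) := by
    have step1 : (∑ i : Fin (ms ++ [n3, n4]).length,
        (-1 : R) ^ (i : ℕ) * ξ (n2 :: (ms ++ [n3, n4]).eraseIdx i) *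
          ξ ((ms ++ [n1]) ++ [(ms ++ [n3, n4]).get i]))
        = ∑ i ∈ Finset.range (ms ++ [n3, n4]).length,
          (-1 : R) ^ i * ξ (n2 :: (ms ++ [n3, n4]).eraseIdx i) *
            ξ ((ms ++ [n1]) ++ [(ms ++ [n3, n4]).getD i 0]) := by
      rw [← Fin.sum_univ_eq_sum_range]
      refine Finset.sum_congr rfl fun i _ => ?_
      rw [List.getD_eq_getElem _ _ i.isLt, List.get_eq_getElem]
    have hlen : (ms ++ [n3, n4]).length = ms.length + 1 + 1 := by simp
    rw [step1, hlen, Finset.sum_range_succ, Finset.sum_range_succ]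
    have hzero : ∀ i ∈ Finset.range ms.length,
        (-1 : R) ^ i * ξ (n2 :: (ms ++ [n3, n4]).eraseIdx i) *
          ξ ((ms ++ [n1]) ++ [(ms ++ [n3, n4]).getD i 0]) = 0 := by
      intro i hi
      have hik : i < ms.length := Finset.mem_range.mp hi
      have hb : (ms ++ [n3, n4]).getD i 0 = ms[i] := by
        rw [List.getD_eq_getElem _ _ (by simp; omega)]
        exact List.getElem_append_left (by omega)
      have hz : ξ ((ms ++ [n1]) ++ [(ms ++ [n3, n4]).getD i 0]) = 0 := by
        apply hdup
        intro hnodup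
        have hdisj := (List.nodup_append'.mp hnodup).2.2
        refine hdisj (a := ms[i]) (by simp) ?_
        rw [hb]
        exact List.mem_singleton_self _
      rw [hz]; ring
    rw [Finset.sum_eq_zero hzero, zero_add]
    have hg1 : (ms ++ [n3, n4]).getD ms.length 0 = n3 := by
      rw [List.getD_eq_getElem _ _ (by simp), List.getElem_append_right (le_refl _)]
      simp
    have hg2 : (ms ++ [n3, n4]).getD (ms.length + 1) 0 = n4 := by
      rw [List.getD_eq_getElem _ _ (by simp), List.getElem_append_right (by omega)]
      simp
    have he1 : (ms ++ [n3, n4]).eraseIdx ms.length = ms ++ [n4] := by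
      rw [List.eraseIdx_append_of_length_le (le_refl _)]
      simp
    have he2 : (ms ++ [n3, n4]).eraseIdx (ms.length + 1) = ms ++ [n3] := by
      rw [List.eraseIdx_append_of_length_le (by omega)]
      have h1 : ms.length + 1 - ms.length = 1 := by omega
      rw [h1]
      simp
    rw [hg1, hg2, he1, he2, heven.neg_one_pow, pow_succ, heven.neg_one_pow]
    ring
  rw [hS1, hS2] at key
  -- clean up the lists in key
  have e0 : (ms ++ [n1]) ++ [n2] = ms ++ [n1, n2] := by simp
  have e1 : ξ (n1 :: n2 :: (ms ++ [n3, n4])) = ξ (ms ++ [n1, n2, n3, n4]) :=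
    moveTwo ms n1 n2 [n3, n4]
  have e2 : ξ (n2 :: (ms ++ [n4])) = ξ (ms ++ [n2, n4]) := moveOneEven n2 [n4]
  have e3 : ξ (n2 :: (ms ++ [n3])) = ξ (ms ++ [n2, n3]) := moveOneEven n2 [n3]
  have e4 : (ms ++ [n1]) ++ [n3] = ms ++ [n1, n3] := by simp
  have e5 : (ms ++ [n1]) ++ [n4] = ms ++ [n1, n4] := by simp
  rw [e0, e1, e2, e3, e4, e5] at key
  linear_combination -key
end

section
/- Giambelli-type formula satisfies the addition relations: let pairings (Λ, Λ^{(i)}) = (Λ^{(i)}, Λ^{(j)}) = 0, (Λ, n), (Λ^{(i)}, n), (n_i, n_j) be a skew-symmetric array over a commutative ring, and for a sequence μ = (μ_1,...,μ_k) of distinct positive integers define ξ_μ = (Λ^ε, Λ^{(1)},...,Λ^{(M)}, μ_1,...,μ_k) (Pfaffian), where ε ∈ {0,1} is chosen so that ε + M + k is even and Λ^0 means Λ is omitted. Then for all k, l ≥ 1 with k + l ≥ 3 odd, ξ_{(n_1,...,n_l)} ξ_{(m_1,...,m_k)} = Σ_{i=1}^{l} (-1)^{i-1} ξ_{(n_i,m_1,...,m_k)}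 ξ_{(n_1,...,n̂_i,...,n_l)} + Σ_{i=1}^{k} (-1)^{l+i-1} ξ_{(m_1,...,m̂_i,...,m_k)} ξ_{(n_1,...,n_l,m_i)}. -/
/-- The Giambelli-type coefficients
`ξ_μ = (Λ^ε, Λ^{(1)},…,Λ^{(M)}, μ_1,…,μ_k)` where `ε ∈ {0,1}` is chosen so that
`ε + M + k` is even (`Λ^0` means `Λ` is omitted).  The symbol `Λ` is encoded as
`Sum.inl none`, `Λ^{(i)}` as `Sum.inl (some i)` and the integer `n` as `Sum.inr n`. -/
noncomputable def giam {R : Type*} [CommRing R] (M : ℕ)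
    (a : (Option (Fin M) ⊕ ℕ) → (Option (Fin M) ⊕ ℕ) → R) (mu : List ℕ) : R :=
  if Even (M + mu.length) then
    pfL a ((List.ofFn fun i : Fin M => Sum.inl (some i)) ++ mu.map Sum.inr)
  else
    pfL a (Sum.inl none :: ((List.ofFn fun i : Fin M => Sum.inl (some i)) ++ mu.map Sum.inr))

section helpers

variable {R : Type*} [CommRing R] {σ : Type*} (a : σ → σ → R) (d : σ)

open Finset

lemma pfS_nil : pfL a ([] : List σ) = 1 := by rw [pfL]

lemma pfS_cons (x : σ) (xs : List σ) : pfL a (x :: xs) =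
    ∑ j ∈ range xs.length, (-1 : R) ^ j * a x (xs.getD j d) * pfL a (xs.eraseIdx j) := by
  rw [pfL, ← Fin.sum_univ_eq_sum_range
    (fun j => (-1 : R) ^ j * a x (xs.getD j d) * pfL a (xs.eraseIdx j)) xs.length]
  refine Finset.sum_congr rfl fun j _ => ?_
  rw [List.getD_eq_getElem _ _ j.isLt, List.get_eq_getElem]

lemma pfS_erase_erase (l : List σ) : ∀ (p q : ℕ), p ≤ q →
    (l.eraseIdx p).eraseIdx q = (l.eraseIdx (q+1)).eraseIdx p := by
  induction l with
  | nil => intro p q _; simp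
  | cons x t ih =>
    intro p q hpq
    cases p with
    | zero => simp [List.eraseIdx]
    | succ p' =>
      cases q with
      | zero => omega
      | succ q' => simp only [List.eraseIdx]; rw [ih p' q' (by omega)]

lemma pfS_map_eraseIdx {τ : Type*} (f : σ → τ) (l : List σ) (i : ℕ) :
    (l.map f).eraseIdx i = (l.eraseIdx i).map f := by
  simp [List.eraseIdx_eq_take_drop_succ, ← List.map_take, ← List.map_drop]

/-- abstract pair cancellation -/
lemma pfS_pair_cancel (n : ℕ) (F : ℕ → ℕ → R)
    (hF : ∀ p q, p < n → q < n → p ≠ q → F p q + F q p = 0) :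
    ∑ j ∈ range n, ∑ i ∈ range (n-1), F j (if i < j then i else i + 1) = 0 := by
  have step : ∀ j ∈ range n, ∑ i ∈ range (n-1), F j (if i < j then i else i + 1)
      = ∑ k ∈ (range n).erase j, F j k := by
    intro j hj
    rw [Finset.mem_range] at hj
    refine Finset.sum_nbij' (fun i => if i < j then i else i + 1)
      (fun k => if k < j then k else k - 1) ?_ ?_ ?_ ?_ ?_
    · intro i hi; rw [Finset.mem_range] at hi
      rw [Finset.mem_erase, Finset.mem_range]
      split <;> omega
    · intro k hk; rw [Finset.mem_erase, Finset.mem_range] at hk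
      rw [Finset.mem_range]; split <;> omega
    · intro i hi; rw [Finset.mem_range] at hi
      split <;> (try split) <;> omega
    · intro k hk; rw [Finset.mem_erase, Finset.mem_range] at hk
      split <;> (try split) <;> omega
    · intro i _; rfl
  rw [Finset.sum_congr rfl step]
  have conv2 : ∀ j ∈ range n, ∑ k ∈ (range n).erase j, F j k
      = ∑ k ∈ range n, if k ≠ j then F j k else 0 := by
    intro j _
    rw [← Finset.filter_ne' (range n) j, Finset.sum_filter]
  rw [Finset.sum_congr rfl conv2]
  have : ∑ j ∈ range n, ∑ k ∈ range n, (if k ≠ j then F j k else 0)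
      = ∑ p ∈ (range n ×ˢ range n).filter (fun p => p.2 ≠ p.1), F p.1 p.2 := by
    rw [Finset.sum_filter, Finset.sum_product]
  rw [this]
  refine Finset.sum_involution (fun p _ => Prod.swap p) ?_ ?_ ?_ ?_
  · intro p hp
    simp only [Finset.mem_filter, Finset.mem_product, Finset.mem_range] at hp
    exact hF p.1 p.2 hp.1.1 hp.1.2 (Ne.symm hp.2)
  · intro p hp _
    simp only [Finset.mem_filter] at hp
    intro hc
    exact hp.2 (congrArg Prod.fst hc) |>.elim
  · intro p hp
    simp only [Finset.mem_filter, Finset.mem_product, Finset.mem_range] at hp ⊢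
    exact ⟨⟨hp.1.2, hp.1.1⟩, Ne.symm hp.2⟩
  · intro p _; rfl

end helpers

section helpers2

variable {R : Type*} [CommRing R] {σ : Type*} (a : σ → σ → R) (d : σ)

open Finset

lemma pfS_cons_cons (x y : σ) (v : List σ) :
    pfL a (x :: y :: v) = a x y * pfL a v +
      ∑ j ∈ range v.length, ∑ i ∈ range (v.length - 1),
        (-1 : R) ^ (j + i + 1) * (a x (v.getD j d) * a y ((v.eraseIdx j).getD i d))
          * pfL a ((v.eraseIdx j).eraseIdx i) := by
  rw [pfS_cons a d x (y :: v)]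
  simp only [List.length_cons]
  rw [Finset.sum_range_succ']
  have h0 : (-1 : R) ^ 0 * a x ((y::v).getD 0 d) * pfL a ((y::v).eraseIdx 0)
      = a x y * pfL a v := by simp [List.eraseIdx]
  rw [h0]
  rw [add_comm]
  congr 1
  refine Finset.sum_congr rfl fun j hj => ?_
  rw [Finset.mem_range] at hj
  have h1 : (y::v).getD (j+1) d = v.getD j d := by simp
  have h2 : (y::v).eraseIdx (j+1) = y :: v.eraseIdx j := by simp [List.eraseIdx]
  rw [h1, h2, pfS_cons a d y (v.eraseIdx j)]
  have h3 : (v.eraseIdx j).length = v.length - 1 := by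
    rw [List.length_eraseIdx]; simp [hj]
  rw [h3, Finset.mul_sum]
  refine Finset.sum_congr rfl fun i _ => ?_
  ring

lemma pfS_reshape (x y : σ) (v : List σ) (j i : ℕ) (hj : j < v.length)
    (hi : i < v.length - 1) :
    (-1 : R) ^ (j + i + 1) * (a x (v.getD j d) * a y ((v.eraseIdx j).getD i d))
      * pfL a ((v.eraseIdx j).eraseIdx i)
    = (fun p q => (if p < q then (1:R) else -1) * (-1) ^ (p + q) *
        (a x (v.getD p d) * a y (v.getD q d)) *
        pfL a ((v.eraseIdx (min p q)).eraseIdx (max p q - 1)))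
        j (if i < j then i else i + 1) := by
  have hlen : (v.eraseIdx j).length = v.length - 1 := by
    rw [List.length_eraseIdx]; simp [hj]
  have hi' : i < (v.eraseIdx j).length := by omega
  by_cases hij : i < j
  · have hgd : (v.eraseIdx j).getD i d = v.getD i d := by
      rw [List.getD_eq_getElem _ _ hi', List.getElem_eraseIdx, dif_pos hij,
        List.getD_eq_getElem _ _ (by omega : i < v.length)]
    have herase : (v.eraseIdx j).eraseIdx i = (v.eraseIdx i).eraseIdx (j - 1) := by
      have hj1 : j - 1 + 1 = j := by omega
      rw [pfS_erase_erase v i (j-1) (by omega), hj1]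
    rw [hgd, herase, if_pos hij]
    dsimp only
    rw [if_neg (by omega : ¬ j < i), min_eq_right (by omega : i ≤ j),
      max_eq_left (by omega : i ≤ j)]
    rw [(by omega : j + i + 1 = (j + i) + 1), pow_succ]
    ring
  · have hgd : (v.eraseIdx j).getD i d = v.getD (i+1) d := by
      rw [List.getD_eq_getElem _ _ hi', List.getElem_eraseIdx, dif_neg hij,
        List.getD_eq_getElem _ _ (by omega : i + 1 < v.length)]
    rw [hgd, if_neg hij]
    dsimp only
    rw [if_pos (by omega : j < i + 1), min_eq_left (by omega : j ≤ i + 1),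
      max_eq_right (by omega : j ≤ i + 1), (by omega : i + 1 - 1 = i),
      (by omega : j + (i + 1) = j + i + 1)]
    ring

lemma pfS_swap_head (hskew : ∀ p q : σ, a p q = - a q p) (x y : σ) (v : List σ) :
    pfL a (x :: y :: v) + pfL a (y :: x :: v) = 0 := by
  rw [pfS_cons_cons a x x y v, pfS_cons_cons a x y x v]
  have hxy : a x y * pfL a v + a y x * pfL a v = 0 := by
    rw [hskew x y]; ring
  have hsum :
      (∑ j ∈ range v.length, ∑ i ∈ range (v.length - 1),
        (-1 : R) ^ (j + i + 1) * (a x (v.getD j x) * a y ((v.eraseIdx j).getD i x))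
          * pfL a ((v.eraseIdx j).eraseIdx i)) +
      (∑ j ∈ range v.length, ∑ i ∈ range (v.length - 1),
        (-1 : R) ^ (j + i + 1) * (a y (v.getD j x) * a x ((v.eraseIdx j).getD i x))
          * pfL a ((v.eraseIdx j).eraseIdx i)) = 0 := by
    rw [← Finset.sum_add_distrib]
    have key : ∀ j ∈ range v.length,
        ((∑ i ∈ range (v.length - 1),
          (-1 : R) ^ (j + i + 1) * (a x (v.getD j x) * a y ((v.eraseIdx j).getD i x))
            * pfL a ((v.eraseIdx j).eraseIdx i)) +
        ∑ i ∈ range (v.length - 1),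
          (-1 : R) ^ (j + i + 1) * (a y (v.getD j x) * a x ((v.eraseIdx j).getD i x))
            * pfL a ((v.eraseIdx j).eraseIdx i)) =
        ∑ i ∈ range (v.length - 1),
          (fun p q => (if p < q then (1:R) else -1) * (-1)^(p+q) *
            (a x (v.getD p x) * a y (v.getD q x)) *
            pfL a ((v.eraseIdx (min p q)).eraseIdx (max p q - 1)) +
          (if p < q then (1:R) else -1) * (-1)^(p+q) *
            (a y (v.getD p x) * a x (v.getD q x)) *
            pfL a ((v.eraseIdx (min p q)).eraseIdx (max p q - 1)))
            j (if i < j then i else i + 1) := by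
      intro j hj
      rw [Finset.mem_range] at hj
      rw [← Finset.sum_add_distrib]
      refine Finset.sum_congr rfl fun i hi => ?_
      rw [Finset.mem_range] at hi
      rw [pfS_reshape a x x y v j i hj hi, pfS_reshape a x y x v j i hj hi]
    rw [Finset.sum_congr rfl key]
    refine pfS_pair_cancel v.length (fun p q =>
          (if p < q then (1:R) else -1) * (-1)^(p+q) *
            (a x (v.getD p x) * a y (v.getD q x)) *
            pfL a ((v.eraseIdx (min p q)).eraseIdx (max p q - 1)) +
          (if p < q then (1:R) else -1) * (-1)^(p+q) *
            (a y (v.getD p x) * a x (v.getD q x)) *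
            pfL a ((v.eraseIdx (min p q)).eraseIdx (max p q - 1)))
        fun p q hp hq hpq => ?_
    rcases lt_or_gt_of_ne hpq with h | h
    · rw [if_pos h, if_neg (by omega : ¬ q < p), min_comm q p, max_comm q p,
        (by omega : q + p = p + q)]
      ring
    · rw [if_neg (by omega : ¬ p < q), if_pos h, min_comm q p, max_comm q p,
        (by omega : q + p = p + q)]
      ring
  linear_combination hxy + hsum

lemma pfS_dup_head (x : σ) (hxx : a x x = 0) (v : List σ) :
    pfL a (x :: x :: v) = 0 := by
  rw [pfS_cons_cons a x x x v, hxx, zero_mul, zero_add]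
  have key : ∀ j ∈ range v.length,
      (∑ i ∈ range (v.length - 1),
        (-1 : R) ^ (j + i + 1) * (a x (v.getD j x) * a x ((v.eraseIdx j).getD i x))
          * pfL a ((v.eraseIdx j).eraseIdx i)) =
      ∑ i ∈ range (v.length - 1),
        (fun p q => (if p < q then (1:R) else -1) * (-1)^(p+q) *
          (a x (v.getD p x) * a x (v.getD q x)) *
          pfL a ((v.eraseIdx (min p q)).eraseIdx (max p q - 1)))
          j (if i < j then i else i + 1) := by
    intro j hj
    rw [Finset.mem_range] at hj
    refine Finset.sum_congr rfl fun i hi => ?_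
    rw [Finset.mem_range] at hi
    rw [pfS_reshape a x x x v j i hj hi]
  rw [Finset.sum_congr rfl key]
  refine pfS_pair_cancel v.length (fun p q =>
        (if p < q then (1:R) else -1) * (-1)^(p+q) *
          (a x (v.getD p x) * a x (v.getD q x)) *
          pfL a ((v.eraseIdx (min p q)).eraseIdx (max p q - 1)))
      fun p q hp hq hpq => ?_
  rcases lt_or_gt_of_ne hpq with h | h
  · rw [if_pos h, if_neg (by omega : ¬ q < p), min_comm q p, max_comm q p,
      (by omega : q + p = p + q)]
    ring
  · rw [if_neg (by omega : ¬ p < q), if_pos h, min_comm q p, max_comm q p,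
      (by omega : q + p = p + q)]
    ring

end helpers2

section helpers3

variable {R : Type*} [CommRing R] {σ : Type*} (a : σ → σ → R)

open Finset

def pfE (p j : ℕ) : ℕ := if j = p then p + 1 else if j = p + 1 then p else j

lemma pfE_invol (p j : ℕ) : pfE p (pfE p j) = j := by
  unfold pfE
  by_cases h1 : j = p
  · subst h1; simp
  · by_cases h2 : j = p + 1
    · subst h2; simp [h1]
    · simp [h1, h2]

lemma pfE_lt {p j N : ℕ} (hp : p + 2 ≤ N) (hj : j < N) : pfE p j < N := by
  unfold pfE
  split
  · omega
  · split <;> omega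

lemma pfS_swap_aux (hskew : ∀ p q : σ, a p q = - a q p) (x y : σ) :
    ∀ (n : ℕ) (u v : List σ), u.length ≤ n →
      pfL a (u ++ x :: y :: v) + pfL a (u ++ y :: x :: v) = 0 := by
  intro n
  induction n with
  | zero =>
    intro u v hu
    have : u = [] := List.length_eq_zero_iff.mp (by omega)
    subst this
    simpa using pfS_swap_head a hskew x y v
  | succ n ih =>
    intro u v hu
    cases u with
    | nil => simpa using pfS_swap_head a hskew x y v
    | cons z u' =>
      set p := u'.length with hp
      set A := u' ++ x :: y :: v with hA
      set B := u' ++ y :: x :: v with hB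
      have hlenA : A.length = p + 2 + v.length := by simp [hA, hp]; omega
      have hlenB : B.length = p + 2 + v.length := by simp [hB, hp]; omega
      set N := p + 2 + v.length with hN
      rw [show (z :: u') ++ x :: y :: v = z :: A by simp [hA],
          show (z :: u') ++ y :: x :: v = z :: B by simp [hB]]
      rw [pfS_cons a z z A, pfS_cons a z z B, hlenA, hlenB]
      have hBA : ∀ j ∈ range N, (-1:R)^j * a z (B.getD j z) * pfL a (B.eraseIdx j)
          = - ((-1:R)^(pfE p j) * a z (A.getD (pfE p j) z) * pfL a (A.eraseIdx (pfE p j))) := by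
        intro j hj
        rw [Finset.mem_range] at hj
        rcases lt_trichotomy j p with hjp | hjp | hjp
        · -- j < p : same index, use ih on u'.eraseIdx j
          have hej : pfE p j = j := by
            unfold pfE; rw [if_neg (by omega), if_neg (by omega)]
          rw [hej]
          have hgA : A.getD j z = u'.getD j z := List.getD_append _ _ _ _ (by omega)
          have hgB : B.getD j z = u'.getD j z := List.getD_append _ _ _ _ (by omega)
          have heA : A.eraseIdx j = (u'.eraseIdx j) ++ x :: y :: v :=
            List.eraseIdx_append_of_lt_length (by omega) _
          have heB : B.eraseIdx j = (u'.eraseIdx j) ++ y :: x :: v :=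
            List.eraseIdx_append_of_lt_length (by omega) _
          have hih := ih (u'.eraseIdx j) v
            (le_trans (List.length_eraseIdx_le _ _) (by simp at hu; omega))
          rw [hgA, hgB, heA, heB]
          have : pfL a (u'.eraseIdx j ++ y :: x :: v)
              = - pfL a (u'.eraseIdx j ++ x :: y :: v) := by linear_combination hih
          rw [this]; ring
        · -- j = p
          rw [hjp]
          have hej : pfE p p = p + 1 := by unfold pfE; rw [if_pos rfl]
          rw [hej]
          have hgB : B.getD p z = y := by
            rw [hB, List.getD_append_right _ _ _ _ (by omega)]
            simp [hp]
          have hgA : A.getD (p+1) z = y := by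
            rw [hA, List.getD_append_right _ _ _ _ (by omega)]
            have h9 : p + 1 - u'.length = 1 := by omega
            rw [h9]
            rfl
          have heB : B.eraseIdx p = u' ++ x :: v := by
            rw [hB, List.eraseIdx_append_of_length_le (by omega) _]
            have h9 : p - u'.length = 0 := by omega
            rw [h9]
            rfl
          have heA : A.eraseIdx (p+1) = u' ++ x :: v := by
            rw [hA, List.eraseIdx_append_of_length_le (by omega) _]
            have h9 : p + 1 - u'.length = 1 := by omega
            rw [h9]
            rfl
          rw [hgA, hgB, heA, heB, pow_succ]
          ring
        · rcases (by omega : j = p + 1 ∨ p + 2 ≤ j) with hjp1 | hjp2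
          · -- j = p + 1
            rw [hjp1]
            have hej : pfE p (p+1) = p := by
              unfold pfE; rw [if_neg (by omega), if_pos rfl]
            rw [hej]
            have hgB : B.getD (p+1) z = x := by
              rw [hB, List.getD_append_right _ _ _ _ (by omega)]
              have : p + 1 - u'.length = 1 := by omega
              rw [this]
              rfl
            have hgA : A.getD p z = x := by
              rw [hA, List.getD_append_right _ _ _ _ (by omega)]
              have : p - u'.length = 0 := by omega
              rw [this]
              rfl
            have heB : B.eraseIdx (p+1) = u' ++ y :: v := by
              rw [hB, List.eraseIdx_append_of_length_le (by omega) _]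
              have : p + 1 - u'.length = 1 := by omega
              rw [this]
              rfl
            have heA : A.eraseIdx p = u' ++ y :: v := by
              rw [hA, List.eraseIdx_append_of_length_le (by omega) _]
              have : p - u'.length = 0 := by omega
              rw [this]
              rfl
            rw [hgA, hgB, heA, heB, pow_succ]
            ring
          · -- j ≥ p + 2
            have hej : pfE p j = j := by
              unfold pfE; rw [if_neg (by omega), if_neg (by omega)]
            rw [hej]
            obtain ⟨t, rfl⟩ : ∃ t, j = p + 2 + t := ⟨j - p - 2, by omega⟩
            have hgB : B.getD (p+2+t) z = v.getD t z := by
              rw [hB, List.getD_append_right _ _ _ _ (by omega)]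
              have : p + 2 + t - u'.length = t + 2 := by omega
              rw [this, List.getD_cons_succ, List.getD_cons_succ]
            have hgA : A.getD (p+2+t) z = v.getD t z := by
              rw [hA, List.getD_append_right _ _ _ _ (by omega)]
              have : p + 2 + t - u'.length = t + 2 := by omega
              rw [this, List.getD_cons_succ, List.getD_cons_succ]
            have heB : B.eraseIdx (p+2+t) = u' ++ y :: x :: v.eraseIdx t := by
              rw [hB, List.eraseIdx_append_of_length_le (by omega) _]
              have : p + 2 + t - u'.length = t + 2 := by omega
              rw [this, List.eraseIdx_cons_succ, List.eraseIdx_cons_succ]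
            have heA : A.eraseIdx (p+2+t) = u' ++ x :: y :: v.eraseIdx t := by
              rw [hA, List.eraseIdx_append_of_length_le (by omega) _]
              have : p + 2 + t - u'.length = t + 2 := by omega
              rw [this, List.eraseIdx_cons_succ, List.eraseIdx_cons_succ]
            have hih := ih u' (v.eraseIdx t) (by simp at hu; omega)
            rw [hgA, hgB, heA, heB]
            have : pfL a (u' ++ y :: x :: v.eraseIdx t)
                = - pfL a (u' ++ x :: y :: v.eraseIdx t) := by linear_combination hih
            rw [this]; ring
      rw [Finset.sum_congr rfl hBA]
      have hre : ∑ j ∈ range N,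
          ((-1:R)^(pfE p j) * a z (A.getD (pfE p j) z) * pfL a (A.eraseIdx (pfE p j)))
          = ∑ j ∈ range N, (-1:R)^j * a z (A.getD j z) * pfL a (A.eraseIdx j) := by
        refine Finset.sum_nbij' (pfE p) (pfE p) ?_ ?_ ?_ ?_ ?_
        · intro j hj; rw [Finset.mem_range] at hj ⊢
          exact pfE_lt (by omega) hj
        · intro j hj; rw [Finset.mem_range] at hj ⊢
          exact pfE_lt (by omega) hj
        · intro j _; exact pfE_invol p j
        · intro j _; exact pfE_invol p j
        · intro j _; rfl
      have hswap : ∑ j ∈ range N,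
          -((-1:R)^(pfE p j) * a z (A.getD (pfE p j) z) * pfL a (A.eraseIdx (pfE p j)))
          = - ∑ j ∈ range N, (-1:R)^j * a z (A.getD j z) * pfL a (A.eraseIdx j) := by
        rw [← hre, Finset.sum_neg_distrib]
      rw [hswap]
      ring

lemma pfS_swap (hskew : ∀ p q : σ, a p q = - a q p) (x y : σ) (u v : List σ) :
    pfL a (u ++ x :: y :: v) + pfL a (u ++ y :: x :: v) = 0 :=
  pfS_swap_aux a hskew x y u.length u v le_rfl

lemma pfS_move (hskew : ∀ p q : σ, a p q = - a q p) (x : σ) :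
    ∀ (v u : List σ), pfL a (u ++ x :: v) = (-1:R)^v.length * pfL a ((u ++ v) ++ [x]) := by
  intro v
  induction v with
  | nil => intro u; simp
  | cons z v' ih =>
    intro u
    have h1 : pfL a (u ++ x :: z :: v') = - pfL a (u ++ z :: x :: v') := by
      linear_combination pfS_swap a hskew x z u v'
    have h2 : u ++ z :: x :: v' = (u ++ [z]) ++ x :: v' := by simp
    have h3 : (u ++ [z]) ++ v' = u ++ z :: v' := by simp
    rw [h1, h2, ih (u ++ [z]), h3]
    simp only [List.length_cons, pow_succ]
    ring

lemma pfS_rotate (hskew : ∀ p q : σ, a p q = - a q p) (x : σ) (v : List σ) :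
    pfL a (v ++ [x]) = (-1:R)^v.length * pfL a (x :: v) := by
  have h : pfL a (x :: v) = (-1:R)^v.length * pfL a (v ++ [x]) := by
    simpa using pfS_move a hskew x v []
  rw [h, ← mul_assoc, ← pow_add]
  rw [Even.neg_one_pow ⟨v.length, rfl⟩, one_mul]

lemma pfS_concat (hskew : ∀ p q : σ, a p q = - a q p) (d : σ) (w : List σ) (x : σ) :
    pfL a (w ++ [x]) = ∑ j ∈ range w.length,
      (-1:R)^(w.length + 1 + j) * a (w.getD j d) x * pfL a (w.eraseIdx j) := by
  rw [pfS_rotate a hskew, pfS_cons a d, Finset.mul_sum]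
  refine Finset.sum_congr rfl fun j _ => ?_
  rw [hskew x (w.getD j d)]
  rw [show w.length + 1 + j = w.length + (1 + j) by omega, pow_add, pow_add]
  ring

lemma pfS_dup_end (hskew : ∀ p q : σ, a p q = - a q p) (x : σ) (hxx : a x x = 0)
    (L : List σ) (hmem : x ∈ L) : pfL a (L ++ [x]) = 0 := by
  obtain ⟨A, B, rfl⟩ := List.append_of_mem hmem
  rw [pfS_rotate a hskew]
  have h1 : (x :: (A ++ x :: B)) = (x :: A) ++ x :: B := by simp
  rw [h1, pfS_move a hskew x B (x :: A), pfS_rotate a hskew]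
  have h2 : (x :: ((x :: A) ++ B)) = x :: x :: (A ++ B) := by simp
  rw [h2, pfS_dup_head a x hxx]
  ring

lemma pfS_star (hskew : ∀ p q : σ, a p q = - a q p) (d : σ) (X Y : List σ)
    (hpar : (-1:R)^X.length = (-1)^Y.length) :
    (∑ r ∈ range Y.length, (-1:R)^r * pfL a (X ++ [Y.getD r d]) * pfL a (Y.eraseIdx r))
    + (∑ s ∈ range X.length, (-1:R)^s * pfL a (X.eraseIdx s) * pfL a (Y ++ [X.getD s d]))
    = 0 := by
  have e1 : ∀ r ∈ range Y.length,
      (-1:R)^r * pfL a (X ++ [Y.getD r d]) * pfL a (Y.eraseIdx r)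
      = ∑ s ∈ range X.length, (-1:R)^r *
          ((-1:R)^(X.length + 1 + s) * a (X.getD s d) (Y.getD r d) * pfL a (X.eraseIdx s))
          * pfL a (Y.eraseIdx r) := by
    intro r _
    rw [pfS_concat a hskew d X (Y.getD r d), Finset.mul_sum, Finset.sum_mul]
  have e2 : ∀ s ∈ range X.length,
      (-1:R)^s * pfL a (X.eraseIdx s) * pfL a (Y ++ [X.getD s d])
      = ∑ r ∈ range Y.length, (-1:R)^s * pfL a (X.eraseIdx s) *
          ((-1:R)^(Y.length + 1 + r) * a (Y.getD r d) (X.getD s d) * pfL a (Y.eraseIdx r)) := by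
    intro s _
    rw [pfS_concat a hskew d Y (X.getD s d), Finset.mul_sum]
  have e2' : (∑ s ∈ range X.length,
      (-1:R)^s * pfL a (X.eraseIdx s) * pfL a (Y ++ [X.getD s d]))
      = ∑ r ∈ range Y.length, ∑ s ∈ range X.length, (-1:R)^s * pfL a (X.eraseIdx s) *
          ((-1:R)^(Y.length + 1 + r) * a (Y.getD r d) (X.getD s d) * pfL a (Y.eraseIdx r)) := by
    rw [Finset.sum_congr rfl e2]
    exact Finset.sum_comm
  rw [Finset.sum_congr rfl e1, e2', ← Finset.sum_add_distrib]
  refine Finset.sum_eq_zero fun r _ => ?_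
  rw [← Finset.sum_add_distrib]
  refine Finset.sum_eq_zero fun s _ => ?_
  rw [hskew (Y.getD r d) (X.getD s d)]
  rw [show X.length + 1 + s = X.length + (1 + s) by omega,
    show Y.length + 1 + r = Y.length + (1 + r) by omega, pow_add, pow_add]
  linear_combination ((-1:R)^r * (-1:R)^(1+s) * a (X.getD s d) (Y.getD r d) *
    pfL a (X.eraseIdx s) * pfL a (Y.eraseIdx r)) * hpar

end helpers3

section final

open Finset

lemma pfS_sum_range_add {β : Type*} [AddCommMonoid β] (f : ℕ → β) (m n : ℕ) :
    ∑ i ∈ Finset.range (m + n), f i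
      = ∑ i ∈ Finset.range m, f i + ∑ i ∈ Finset.range n, f (m + i) := by
  induction n with
  | zero => simp
  | succ n ih =>
    rw [show m + (n+1) = (m+n)+1 by omega, Finset.sum_range_succ, ih,
      Finset.sum_range_succ, add_assoc]

lemma pfS_pow_eq {R : Type*} [Monoid R] [HasDistribNeg R] {m n : ℕ} (h : m % 2 = n % 2) :
    (-1:R)^m = (-1)^n := by
  rcases Nat.even_or_odd m with he | ho
  · rw [Even.neg_one_pow he,
      Even.neg_one_pow (Nat.even_iff.mpr (by rw [Nat.even_iff] at he; omega))]
  · rw [Odd.neg_one_pow ho,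
      Odd.neg_one_pow (Nat.odd_iff.mpr (by rw [Nat.odd_iff] at ho; omega))]

/-- The Giambelli-type formula satisfies the odd addition relations: with a
skew-symmetric pairing satisfying `(Λ,Λ^{(i)}) = (Λ^{(i)},Λ^{(j)}) = 0`, for all
sequences of distinct positive integers `(n_1,…,n_l)`, `(m_1,…,m_k)` with
`k, l ≥ 1` and `k + l ≥ 3` odd,
`ξ_{(n_1,…,n_l)} ξ_{(m_1,…,m_k)}
 = Σ_{i=1}^{l} (-1)^{i-1} ξ_{(n_i,m_1,…,m_k)} ξ_{(n_1,…,n̂_i,…,n_l)}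
 + Σ_{i=1}^{k} (-1)^{l+i-1} ξ_{(m_1,…,m̂_i,…,m_k)} ξ_{(n_1,…,n_l,m_i)}`. -/
theorem stmt13 {R : Type*} [CommRing R] (M : ℕ)
    (a : (Option (Fin M) ⊕ ℕ) → (Option (Fin M) ⊕ ℕ) → R)
    (hskew : ∀ X Y, a X Y = - a Y X)
    (hLL : ∀ i j : Option (Fin M), a (Sum.inl i) (Sum.inl j) = 0)
    (ns ms : List ℕ) (hns : ns.Nodup) (hms : ms.Nodup)
    (hnpos : ∀ x ∈ ns, 0 < x) (hmpos : ∀ x ∈ ms, 0 < x)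
    (hl : 1 ≤ ns.length) (hk : 1 ≤ ms.length) (hodd : Odd (ns.length + ms.length)) :
    giam M a ns * giam M a ms =
      (∑ i : Fin ns.length,
        (-1 : R) ^ (i : ℕ) * giam M a (ns.get i :: ms) * giam M a (ns.eraseIdx i))
      + ∑ i : Fin ms.length,
        (-1 : R) ^ (ns.length + (i : ℕ)) * giam M a (ms.eraseIdx i)
          * giam M a (ns ++ [ms.get i]) := by
  classical
  set P : List (Option (Fin M) ⊕ ℕ) := List.ofFn (fun i : Fin M => Sum.inl (some i))
    with hPdef
  have hPlen : P.length = M := by rw [hPdef]; exact List.length_ofFn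
  have hlk : (ns.length + ms.length) % 2 = 1 := Nat.odd_iff.mp hodd
  -- unfolding lemmas for giam
  have hge : ∀ mu : List ℕ, (M + mu.length) % 2 = 0 →
      giam M a mu = pfL a (P ++ mu.map Sum.inr) := by
    intro mu h
    simp only [giam]
    rw [if_pos (Nat.even_iff.mpr h), hPdef]
  have hgo : ∀ mu : List ℕ, (M + mu.length) % 2 = 1 →
      giam M a mu = pfL a (Sum.inl none :: (P ++ mu.map Sum.inr)) := by
    intro mu h
    simp only [giam]
    rw [if_neg (by rw [Nat.even_iff]; omega), hPdef]
  have hPgetD : ∀ r (hr : r < M),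
      P.getD r (Sum.inl none) = Sum.inl (some ⟨r, hr⟩) := by
    intro r hr
    rw [hPdef, List.getD_eq_getElem _ _ (by rw [List.length_ofFn]; exact hr),
      List.getElem_ofFn]
  have hmemP : ∀ r (hr : r < M),
      (Sum.inl (some ⟨r, hr⟩) : Option (Fin M) ⊕ ℕ) ∈ P := by
    intro r hr
    rw [hPdef, List.mem_ofFn]
    exact ⟨⟨r, hr⟩, rfl⟩
  have hdup : ∀ (L : List (Option (Fin M) ⊕ ℕ)) (o : Option (Fin M)),
      Sum.inl o ∈ L → pfL a (L ++ [Sum.inl o]) = 0 :=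
    fun L o h => pfS_dup_end a hskew _ (hLL o o) L h
  have hmapget : ∀ (ls : List ℕ) (j : ℕ), j < ls.length →
      (ls.map Sum.inr).getD j (Sum.inl none) = (Sum.inr (ls.getD j 0) : Option (Fin M) ⊕ ℕ) := by
    intro ls j h
    rw [List.getD_eq_getElem _ _ (by simpa using h), List.getElem_map,
      List.getD_eq_getElem _ _ h]
  -- convert the goal sums to range sums
  have hgoal1 :
      (∑ i : Fin ns.length,
        (-1 : R) ^ (i : ℕ) * giam M a (ns.get i :: ms) * giam M a (ns.eraseIdx i))
      = ∑ i ∈ Finset.range ns.length,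
          (-1:R)^i * giam M a (ns.getD i 0 :: ms) * giam M a (ns.eraseIdx i) := by
    rw [← Fin.sum_univ_eq_sum_range
      (fun i => (-1:R)^i * giam M a (ns.getD i 0 :: ms) * giam M a (ns.eraseIdx i)) ns.length]
    refine Finset.sum_congr rfl fun i _ => ?_
    rw [List.get_eq_getElem, ← List.getD_eq_getElem ns 0 i.isLt]
  have hgoal2 :
      (∑ i : Fin ms.length,
        (-1 : R) ^ (ns.length + (i : ℕ)) * giam M a (ms.eraseIdx i)
          * giam M a (ns ++ [ms.get i]))
      = ∑ i ∈ Finset.range ms.length,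
          (-1:R)^(ns.length + i) * giam M a (ms.eraseIdx i)
            * giam M a (ns ++ [ms.getD i 0]) := by
    rw [← Fin.sum_univ_eq_sum_range
      (fun i => (-1:R)^(ns.length + i) * giam M a (ms.eraseIdx i)
        * giam M a (ns ++ [ms.getD i 0])) ms.length]
    refine Finset.sum_congr rfl fun i _ => ?_
    rw [List.get_eq_getElem, ← List.getD_eq_getElem ms 0 i.isLt]
  rw [hgoal1, hgoal2]
  rcases Nat.even_or_odd (M + ns.length) with hMl | hMl
  · -- Case 1 : M + ns.length even
    have hMl2 : (M + ns.length) % 2 = 0 := Nat.even_iff.mp hMl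
    have hMk2 : (M + ms.length) % 2 = 1 := by omega
    set X : List (Option (Fin M) ⊕ ℕ) := Sum.inl none :: (P ++ ns.map Sum.inr) with hXdef
    set Y : List (Option (Fin M) ⊕ ℕ) := P ++ ms.map Sum.inr with hYdef
    have hXlen : X.length = (M + ns.length) + 1 := by
      rw [hXdef]; simp [hPlen]
    have hYlen : Y.length = M + ms.length := by
      rw [hYdef]; simp [hPlen]
    have hparR : (-1:R)^X.length = (-1)^Y.length := by
      rw [hXlen, hYlen]; exact pfS_pow_eq (by omega)
    have star := pfS_star a hskew (Sum.inl none) X Y hparR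
    -- first sum
    have hS1 : (∑ r ∈ Finset.range Y.length,
        (-1:R)^r * pfL a (X ++ [Y.getD r (Sum.inl none)]) * pfL a (Y.eraseIdx r))
        = ∑ j ∈ Finset.range ms.length,
            (-1:R)^(M + j) * giam M a (ns ++ [ms.getD j 0]) * giam M a (ms.eraseIdx j) := by
      rw [hYlen, pfS_sum_range_add
        (fun r => (-1:R)^r * pfL a (X ++ [Y.getD r (Sum.inl none)]) * pfL a (Y.eraseIdx r))
        M ms.length]
      have hz : (∑ r ∈ Finset.range M,
          (-1:R)^r * pfL a (X ++ [Y.getD r (Sum.inl none)]) * pfL a (Y.eraseIdx r)) = 0 := by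
        refine Finset.sum_eq_zero fun r hr => ?_
        rw [Finset.mem_range] at hr
        have hg : Y.getD r (Sum.inl none) = Sum.inl (some ⟨r, hr⟩) := by
          rw [hYdef, List.getD_append _ _ _ r (by omega), hPgetD r hr]
        have hmem : (Sum.inl (some ⟨r, hr⟩) : Option (Fin M) ⊕ ℕ) ∈ X := by
          rw [hXdef]
          exact List.mem_cons_of_mem _ (List.mem_append_left _ (hmemP r hr))
        rw [hg, hdup X _ hmem, mul_zero, zero_mul]
      rw [hz, zero_add]
      refine Finset.sum_congr rfl fun j hj => ?_
      rw [Finset.mem_range] at hj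
      have hg : Y.getD (M + j) (Sum.inl none) = Sum.inr (ms.getD j 0) := by
        rw [hYdef, List.getD_append_right _ _ _ _ (by omega),
          show M + j - P.length = j by omega, hmapget ms j hj]
      have h1 : pfL a (X ++ [(Sum.inr (ms.getD j 0) : Option (Fin M) ⊕ ℕ)])
          = giam M a (ns ++ [ms.getD j 0]) := by
        rw [hgo (ns ++ [ms.getD j 0]) (by simp; omega)]
        congr 1
        rw [hXdef]
        simp
      have hlen9 : (ms.eraseIdx j).length = ms.length - 1 := by
        rw [List.length_eraseIdx, if_pos (by omega)]
      have h2 : pfL a (Y.eraseIdx (M + j)) = giam M a (ms.eraseIdx j) := by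
        rw [hge (ms.eraseIdx j) (by rw [hlen9]; omega)]
        congr 1
        rw [hYdef, List.eraseIdx_append_of_length_le (by omega) _,
          show M + j - P.length = j by omega, pfS_map_eraseIdx]
      rw [hg, h1, h2]
    -- second sum
    have hS2 : (∑ s ∈ Finset.range X.length,
        (-1:R)^s * pfL a (X.eraseIdx s) * pfL a (Y ++ [X.getD s (Sum.inl none)]))
        = (∑ i ∈ Finset.range ns.length,
            (-1:R)^i * giam M a (ns.getD i 0 :: ms) * giam M a (ns.eraseIdx i))
          - giam M a ns * giam M a ms := by
      rw [hXlen, Finset.sum_range_succ'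
        (fun s => (-1:R)^s * pfL a (X.eraseIdx s) * pfL a (Y ++ [X.getD s (Sum.inl none)]))
        (M + ns.length)]
      rw [pfS_sum_range_add
        (fun s => (-1:R)^(s+1) * pfL a (X.eraseIdx (s+1))
          * pfL a (Y ++ [X.getD (s+1) (Sum.inl none)])) M ns.length]
      have hz : (∑ s ∈ Finset.range M,
          (-1:R)^(s+1) * pfL a (X.eraseIdx (s+1))
            * pfL a (Y ++ [X.getD (s+1) (Sum.inl none)])) = 0 := by
        refine Finset.sum_eq_zero fun s hs => ?_
        rw [Finset.mem_range] at hs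
        have hg : X.getD (s+1) (Sum.inl none) = Sum.inl (some ⟨s, hs⟩) := by
          rw [hXdef, List.getD_cons_succ, List.getD_append _ _ _ s (by omega), hPgetD s hs]
        have hmem : (Sum.inl (some ⟨s, hs⟩) : Option (Fin M) ⊕ ℕ) ∈ Y := by
          rw [hYdef]
          exact List.mem_append_left _ (hmemP s hs)
        rw [hg, hdup Y _ hmem, mul_zero]
      rw [hz, zero_add]
      have hf0 : (-1:R)^0 * pfL a (X.eraseIdx 0) * pfL a (Y ++ [X.getD 0 (Sum.inl none)])
          = - (giam M a ns * giam M a ms) := by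
        have hg : X.getD 0 (Sum.inl none) = Sum.inl none := by rw [hXdef]; rfl
        have he : X.eraseIdx 0 = P ++ ns.map Sum.inr := by rw [hXdef]; rfl
        have h1 : pfL a (P ++ ns.map Sum.inr) = giam M a ns := by
          rw [hge ns hMl2]
        have h2 : pfL a (Y ++ [(Sum.inl none : Option (Fin M) ⊕ ℕ)])
            = (-1:R)^(M + ms.length) * giam M a ms := by
          rw [pfS_rotate a hskew, hYlen, hgo ms hMk2, hYdef]
        rw [hg, he, h1, h2, pow_zero, one_mul,
          pfS_pow_eq (show (M + ms.length) % 2 = 1 % 2 by omega), pow_one]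
        ring
      rw [hf0]
      have hmain : ∀ i ∈ Finset.range ns.length,
          (-1:R)^(M + i + 1) * pfL a (X.eraseIdx (M + i + 1))
            * pfL a (Y ++ [X.getD (M + i + 1) (Sum.inl none)])
          = (-1:R)^i * giam M a (ns.getD i 0 :: ms) * giam M a (ns.eraseIdx i) := by
        intro i hi
        rw [Finset.mem_range] at hi
        have hg : X.getD (M + i + 1) (Sum.inl none) = Sum.inr (ns.getD i 0) := by
          rw [hXdef, List.getD_cons_succ, List.getD_append_right _ _ _ _ (by omega),
            show M + i - P.length = i by omega, hmapget ns i hi]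
        have hlen9 : (ns.eraseIdx i).length = ns.length - 1 := by
          rw [List.length_eraseIdx, if_pos (by omega)]
        have h1 : pfL a (X.eraseIdx (M + i + 1)) = giam M a (ns.eraseIdx i) := by
          rw [hgo (ns.eraseIdx i) (by rw [hlen9]; omega)]
          rw [hXdef, List.eraseIdx_cons_succ]
          congr 2
          rw [List.eraseIdx_append_of_length_le (by omega) _,
            show M + i - P.length = i by omega, pfS_map_eraseIdx]
        have h2 : pfL a (Y ++ [(Sum.inr (ns.getD i 0) : Option (Fin M) ⊕ ℕ)])
            = (-1:R)^ms.length * giam M a (ns.getD i 0 :: ms) := by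
          have h := pfS_move a hskew (Sum.inr (ns.getD i 0) : Option (Fin M) ⊕ ℕ)
            (ms.map Sum.inr) P
          rw [List.length_map, ← hYdef] at h
          have hE : (-1:R)^ms.length * (-1:R)^ms.length = 1 := by
            rw [← pow_add]; exact Even.neg_one_pow ⟨ms.length, rfl⟩
          rw [hge (ns.getD i 0 :: ms) (by simp; omega), List.map_cons]
          linear_combination (-(-1:R)^ms.length) * h
            - pfL a (Y ++ [(Sum.inr (ns.getD i 0) : Option (Fin M) ⊕ ℕ)]) * hE
        rw [hg, h1, h2]
        have hsg : (-1:R)^(M + i + 1) * (-1:R)^ms.length = (-1:R)^i := by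
          rw [← pow_add]
          exact pfS_pow_eq (by omega)
        linear_combination (giam M a (ns.eraseIdx i) * giam M a (ns.getD i 0 :: ms)) * hsg
      rw [Finset.sum_congr rfl hmain]
      ring
    rw [hS1, hS2] at star
    have hc : ∀ j ∈ Finset.range ms.length,
        (-1:R)^(M + j) * giam M a (ns ++ [ms.getD j 0]) * giam M a (ms.eraseIdx j)
        = (-1:R)^(ns.length + j) * giam M a (ms.eraseIdx j) * giam M a (ns ++ [ms.getD j 0]) := by
      intro j _
      rw [pfS_pow_eq (show (M + j) % 2 = (ns.length + j) % 2 by omega)]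
      ring
    rw [Finset.sum_congr rfl hc] at star
    linear_combination -star
  · -- Case 2 : M + ns.length odd
    have hMl2 : (M + ns.length) % 2 = 1 := Nat.odd_iff.mp hMl
    have hMk2 : (M + ms.length) % 2 = 0 := by omega
    set X : List (Option (Fin M) ⊕ ℕ) := P ++ ns.map Sum.inr with hXdef
    set Y : List (Option (Fin M) ⊕ ℕ) := Sum.inl none :: (P ++ ms.map Sum.inr) with hYdef
    have hXlen : X.length = M + ns.length := by
      rw [hXdef]; simp [hPlen]
    have hYlen : Y.length = (M + ms.length) + 1 := by
      rw [hYdef]; simp [hPlen]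
    have hparR : (-1:R)^X.length = (-1)^Y.length := by
      rw [hXlen, hYlen]; exact pfS_pow_eq (by omega)
    have star := pfS_star a hskew (Sum.inl none) X Y hparR
    -- first sum
    have hS1 : (∑ r ∈ Finset.range Y.length,
        (-1:R)^r * pfL a (X ++ [Y.getD r (Sum.inl none)]) * pfL a (Y.eraseIdx r))
        = (∑ j ∈ Finset.range ms.length,
            (-1:R)^(ns.length + j) * giam M a (ms.eraseIdx j) * giam M a (ns ++ [ms.getD j 0]))
          - giam M a ns * giam M a ms := by
      rw [hYlen, Finset.sum_range_succ'
        (fun r => (-1:R)^r * pfL a (X ++ [Y.getD r (Sum.inl none)]) * pfL a (Y.eraseIdx r))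
        (M + ms.length)]
      rw [pfS_sum_range_add
        (fun r => (-1:R)^(r+1) * pfL a (X ++ [Y.getD (r+1) (Sum.inl none)])
          * pfL a (Y.eraseIdx (r+1))) M ms.length]
      have hz : (∑ r ∈ Finset.range M,
          (-1:R)^(r+1) * pfL a (X ++ [Y.getD (r+1) (Sum.inl none)])
            * pfL a (Y.eraseIdx (r+1))) = 0 := by
        refine Finset.sum_eq_zero fun r hr => ?_
        rw [Finset.mem_range] at hr
        have hg : Y.getD (r+1) (Sum.inl none) = Sum.inl (some ⟨r, hr⟩) := by
          rw [hYdef, List.getD_cons_succ, List.getD_append _ _ _ r (by omega), hPgetD r hr]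
        have hmem : (Sum.inl (some ⟨r, hr⟩) : Option (Fin M) ⊕ ℕ) ∈ X := by
          rw [hXdef]
          exact List.mem_append_left _ (hmemP r hr)
        rw [hg, hdup X _ hmem, mul_zero, zero_mul]
      rw [hz, zero_add]
      have hf0 : (-1:R)^0 * pfL a (X ++ [Y.getD 0 (Sum.inl none)]) * pfL a (Y.eraseIdx 0)
          = - (giam M a ns * giam M a ms) := by
        have hg : Y.getD 0 (Sum.inl none) = Sum.inl none := by rw [hYdef]; rfl
        have he : Y.eraseIdx 0 = P ++ ms.map Sum.inr := by rw [hYdef]; rfl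
        have h2 : pfL a (P ++ ms.map Sum.inr) = giam M a ms := by
          rw [hge ms hMk2]
        have h1 : pfL a (X ++ [(Sum.inl none : Option (Fin M) ⊕ ℕ)])
            = (-1:R)^(M + ns.length) * giam M a ns := by
          rw [pfS_rotate a hskew, hXlen, hgo ns hMl2, hXdef]
        rw [hg, he, h1, h2, pow_zero, one_mul,
          pfS_pow_eq (show (M + ns.length) % 2 = 1 % 2 by omega), pow_one]
        ring
      rw [hf0]
      have hmain : ∀ j ∈ Finset.range ms.length,
          (-1:R)^(M + j + 1) * pfL a (X ++ [Y.getD (M + j + 1) (Sum.inl none)])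
            * pfL a (Y.eraseIdx (M + j + 1))
          = (-1:R)^(ns.length + j) * giam M a (ms.eraseIdx j) * giam M a (ns ++ [ms.getD j 0]) := by
        intro j hj
        rw [Finset.mem_range] at hj
        have hg : Y.getD (M + j + 1) (Sum.inl none) = Sum.inr (ms.getD j 0) := by
          rw [hYdef, List.getD_cons_succ, List.getD_append_right _ _ _ _ (by omega),
            show M + j - P.length = j by omega, hmapget ms j hj]
        have h1 : pfL a (X ++ [(Sum.inr (ms.getD j 0) : Option (Fin M) ⊕ ℕ)])
            = giam M a (ns ++ [ms.getD j 0]) := by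
          rw [hge (ns ++ [ms.getD j 0]) (by simp; omega)]
          congr 1
          rw [hXdef]
          simp
        have hlen9 : (ms.eraseIdx j).length = ms.length - 1 := by
          rw [List.length_eraseIdx, if_pos (by omega)]
        have h2 : pfL a (Y.eraseIdx (M + j + 1)) = giam M a (ms.eraseIdx j) := by
          rw [hgo (ms.eraseIdx j) (by rw [hlen9]; omega)]
          rw [hYdef, List.eraseIdx_cons_succ]
          congr 2
          rw [List.eraseIdx_append_of_length_le (by omega) _,
            show M + j - P.length = j by omega, pfS_map_eraseIdx]
        rw [hg, h1, h2, pfS_pow_eq (show (M + j + 1) % 2 = (ns.length + j) % 2 by omega)]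
        ring
      rw [Finset.sum_congr rfl hmain]
      ring
    -- second sum
    have hS2 : (∑ s ∈ Finset.range X.length,
        (-1:R)^s * pfL a (X.eraseIdx s) * pfL a (Y ++ [X.getD s (Sum.inl none)]))
        = ∑ i ∈ Finset.range ns.length,
            (-1:R)^i * giam M a (ns.getD i 0 :: ms) * giam M a (ns.eraseIdx i) := by
      rw [hXlen, pfS_sum_range_add
        (fun s => (-1:R)^s * pfL a (X.eraseIdx s) * pfL a (Y ++ [X.getD s (Sum.inl none)]))
        M ns.length]
      have hz : (∑ s ∈ Finset.range M,
          (-1:R)^s * pfL a (X.eraseIdx s) * pfL a (Y ++ [X.getD s (Sum.inl none)])) = 0 := by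
        refine Finset.sum_eq_zero fun s hs => ?_
        rw [Finset.mem_range] at hs
        have hg : X.getD s (Sum.inl none) = Sum.inl (some ⟨s, hs⟩) := by
          rw [hXdef, List.getD_append _ _ _ s (by omega), hPgetD s hs]
        have hmem : (Sum.inl (some ⟨s, hs⟩) : Option (Fin M) ⊕ ℕ) ∈ Y := by
          rw [hYdef]
          exact List.mem_cons_of_mem _ (List.mem_append_left _ (hmemP s hs))
        rw [hg, hdup Y _ hmem, mul_zero]
      rw [hz, zero_add]
      refine Finset.sum_congr rfl fun i hi => ?_
      rw [Finset.mem_range] at hi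
      have hg : X.getD (M + i) (Sum.inl none) = Sum.inr (ns.getD i 0) := by
        rw [hXdef, List.getD_append_right _ _ _ _ (by omega),
          show M + i - P.length = i by omega, hmapget ns i hi]
      have hlen9 : (ns.eraseIdx i).length = ns.length - 1 := by
        rw [List.length_eraseIdx, if_pos (by omega)]
      have h1 : pfL a (X.eraseIdx (M + i)) = giam M a (ns.eraseIdx i) := by
        rw [hge (ns.eraseIdx i) (by rw [hlen9]; omega)]
        congr 1
        rw [hXdef, List.eraseIdx_append_of_length_le (by omega) _,
          show M + i - P.length = i by omega, pfS_map_eraseIdx]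
      have h2 : pfL a (Y ++ [(Sum.inr (ns.getD i 0) : Option (Fin M) ⊕ ℕ)])
          = (-1:R)^ms.length * giam M a (ns.getD i 0 :: ms) := by
        have h := pfS_move a hskew (Sum.inr (ns.getD i 0) : Option (Fin M) ⊕ ℕ)
          (ms.map Sum.inr) (Sum.inl none :: P)
        simp only [List.cons_append] at h
        rw [List.length_map] at h
        have hYz : Y ++ [(Sum.inr (ns.getD i 0) : Option (Fin M) ⊕ ℕ)]
            = Sum.inl none :: (P ++ List.map Sum.inr ms ++ [Sum.inr (ns.getD i 0)]) := by
          rw [hYdef, List.cons_append]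
        have hE : (-1:R)^ms.length * (-1:R)^ms.length = 1 := by
          rw [← pow_add]; exact Even.neg_one_pow ⟨ms.length, rfl⟩
        rw [hYz, hgo (ns.getD i 0 :: ms) (by simp; omega), List.map_cons]
        linear_combination (-(-1:R)^ms.length) * h
          - pfL a (Sum.inl none ::
              (P ++ List.map Sum.inr ms ++ [(Sum.inr (ns.getD i 0) : Option (Fin M) ⊕ ℕ)])) * hE
      rw [hg, h1, h2]
      have hsg : (-1:R)^(M + i) * (-1:R)^ms.length = (-1:R)^i := by
        rw [← pow_add]
        exact pfS_pow_eq (by omega)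
      linear_combination (giam M a (ns.eraseIdx i) * giam M a (ns.getD i 0 :: ms)) * hsg
    rw [hS1, hS2] at star
    linear_combination -star

end final
end

section
/- Uniqueness of coefficients: let λ = (λ_1 > ··· > λ_{2L-1} ≥ 1) be a strict partition. Suppose ring-valued skew-symmetric coefficients ξ on finite sequences of distinct non-negative integers satisfy ξ_λ = 1, ξ_μ = 0 for |μ| < |λ|, and the relations (A) for even l: ξ_{(n_1,...,n_l)} = Σ_{i=1}^{l} (-1)^{i-1} ξ_{(n_i,λ_1,...,λ_{2L-1})} ξ_{(n_1,...,n̂_i,...,n_l)}, and (B) for odd l: ξ_{(n_1,...,n_l)} = Σ_{i=1}^{l-1} (-1)^i ξ_{(n_i,n_l,λ_1,...,λ_{2L-1})} ξ_{(n_1,...,n̂_i,...,n_{l-1})} + Σ_{i=1}^{2L-1} (-1)^{i-1} ξ_{(n_l,λ_1,...,λ̂_i,...,λ_{2L-1})} ξ_{(n_1,...,n_{l-1},λ_i)}. Then every ξ_{(n_1,...,n_l)} is uniquely determined as a polynomial in the values ξ_{(λ_1,...,λ̂_i,...,λ_{2L-1},n)} (n > λ_i), ξ_{(λ_1,...,λ_{2L-1},n)},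 and ξ_{(λ_1,...,λ_{2L-1},n_1,n_2)}. -/
/-- Skew-symmetry of a family of coefficients indexed by finite sequences:
transposing two adjacent entries changes the sign, and the value vanishes when
two entries coincide. -/
def SkewCoeff {R : Type*} [CommRing R] (ξ : List ℕ → R) : Prop :=
  (∀ (l1 l2 : List ℕ) (a b : ℕ), ξ (l1 ++ a :: b :: l2) = - ξ (l1 ++ b :: a :: l2)) ∧
  (∀ l : List ℕ, ¬ l.Nodup → ξ l = 0)

/-- Relation (A) (for even `l`):
`ξ_{(n_1,…,n_l)} = Σ_{i=1}^{l} (-1)^{i-1} ξ_{(n_i,λ_1,…,λ_{2L-1})} ξ_{(n_1,…,n̂_i,…,n_l)}`. -/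
def RelA {R : Type*} [CommRing R] (L : ℕ) (lam : Fin (2*L-1) → ℕ) (ξ : List ℕ → R) : Prop :=
  ∀ ns : List ℕ, ns.Nodup → (∀ x ∈ ns, 0 < x) → Even ns.length → ns ≠ [] →
    ξ ns = ∑ i : Fin ns.length,
      (-1 : R) ^ (i : ℕ) * ξ (ns.get i :: List.ofFn lam) * ξ (ns.eraseIdx i)

/-- Relation (B) (for odd `l`, writing the sequence as `ns ++ [nl]` with
`ns.length` even):
`ξ_{(n_1,…,n_l)} = Σ_{i=1}^{l-1} (-1)^i ξ_{(n_i,n_l,λ_1,…,λ_{2L-1})} ξ_{(n_1,…,n̂_i,…,n_{l-1})}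
 + Σ_{i=1}^{2L-1} (-1)^{i-1} ξ_{(n_l,λ_1,…,λ̂_i,…,λ_{2L-1})} ξ_{(n_1,…,n_{l-1},λ_i)}`. -/
def RelB {R : Type*} [CommRing R] (L : ℕ) (lam : Fin (2*L-1) → ℕ) (ξ : List ℕ → R) : Prop :=
  ∀ (ns : List ℕ) (nl : ℕ), (ns ++ [nl]).Nodup → (∀ x ∈ ns ++ [nl], 0 < x) →
    Even ns.length →
    ξ (ns ++ [nl]) =
      (∑ i : Fin ns.length,
        (-1 : R) ^ ((i : ℕ) + 1) * ξ (ns.get i :: nl :: List.ofFn lam) * ξ (ns.eraseIdx i))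
      + ∑ i : Fin (2*L-1),
        (-1 : R) ^ (i : ℕ) * ξ (nl :: (List.ofFn lam).eraseIdx i) * ξ (ns ++ [lam i])

lemma skew_cons {R : Type*} [CommRing R] {ξ : List ℕ → R} (hs : SkewCoeff ξ) (x : ℕ) :
    SkewCoeff (fun l => ξ (x :: l)) := by
  constructor
  · intro l1 l2 a b
    simpa using hs.1 (x :: l1) l2 a b
  · intro l hl
    exact hs.2 _ (by simp only [List.nodup_cons]; tauto)

lemma perm_factor {R : Type*} [CommRing R] :
    ∀ {m m' : List ℕ}, m.Perm m' →
      ∃ c : R, ∀ ξ : List ℕ → R, SkewCoeff ξ → ξ m = c * ξ m' := by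
  intro m m' h
  induction h with
  | nil => exact ⟨1, fun ξ _ => (one_mul _).symm⟩
  | cons x h ih =>
    obtain ⟨c, hc⟩ := ih
    exact ⟨c, fun ξ hξ => hc _ (skew_cons hξ x)⟩
  | swap a b t =>
    refine ⟨-1, fun ξ hξ => ?_⟩
    have := hξ.1 [] t b a
    simp only [List.nil_append] at this
    rw [this]; ring
  | trans h1 h2 ih1 ih2 =>
    obtain ⟨c1, hc1⟩ := ih1
    obtain ⟨c2, hc2⟩ := ih2
    exact ⟨c1 * c2, fun ξ hξ => by rw [hc1 ξ hξ, hc2 ξ hξ, mul_assoc]⟩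

lemma perm_transfer {R : Type*} [CommRing R] {ξ ξ' : List ℕ → R}
    (hs : SkewCoeff ξ) (hs' : SkewCoeff ξ') {m m' : List ℕ} (hp : m.Perm m')
    (h : ξ m' = ξ' m') : ξ m = ξ' m := by
  obtain ⟨c, hc⟩ := perm_factor (R := R) hp
  rw [hc ξ hs, hc ξ' hs', h]

def muStmt16 (lamL : List ℕ) (l : List ℕ) : ℕ :=
  l.length + (l.filter (fun x => decide (x ∉ lamL))).length

lemma muStmt16_sublist {lamL a b : List ℕ} (h : a.Sublist b) :
    muStmt16 lamL a ≤ muStmt16 lamL b :=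
  Nat.add_le_add h.length_le ((h.filter _).length_le)

lemma muStmt16_eraseIdx {lamL m : List ℕ} (i : ℕ) (hi : i < m.length) :
    muStmt16 lamL (m.eraseIdx i) < muStmt16 lamL m := by
  have l1 : (m.eraseIdx i).length + 1 = m.length := List.length_eraseIdx_add_one hi
  have l2 : ((m.eraseIdx i).filter (fun x => decide (x ∉ lamL))).length
      ≤ (m.filter (fun x => decide (x ∉ lamL))).length :=
    ((m.eraseIdx_sublist i).filter _).length_le
  unfold muStmt16; omega

lemma muStmt16_swap {lamL m ns : List ℕ} {x y : ℕ} (hx : x ∉ lamL) (hy : y ∈ lamL)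
    (hp : m.Perm (x :: ns)) :
    muStmt16 lamL (ns ++ [y]) < muStmt16 lamL m := by
  have hlen : m.length = ns.length + 1 := by
    have := hp.length_eq; simpa using this
  have hfil : (m.filter (fun x => decide (x ∉ lamL))).length
      = ((x :: ns).filter (fun x => decide (x ∉ lamL))).length :=
    (hp.filter _).length_eq
  have h2 : ((x :: ns).filter (fun x => decide (x ∉ lamL))).length
      = (ns.filter (fun x => decide (x ∉ lamL))).length + 1 := by
    simp [List.filter_cons, hx]
  have h3 : ((ns ++ [y]).filter (fun x => decide (x ∉ lamL))).length
      = (ns.filter (fun x => decide (x ∉ lamL))).length := by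
    simp [List.filter_append, hy]
  unfold muStmt16
  rw [List.length_append, h3, hfil, h2]
  simp; omega

lemma getElem_ofFn' {n : ℕ} (f : Fin n → ℕ) (i : Fin n) (h : (i:ℕ) < (List.ofFn f).length) :
    (List.ofFn f)[(i:ℕ)]'h = f i := by simp [List.getElem_ofFn]

lemma muStmt16_tail {lamL m ns : List ℕ} {x : ℕ} (hp : m.Perm (x :: ns)) :
    muStmt16 lamL ns < muStmt16 lamL m := by
  have hlen : m.length = ns.length + 1 := by simpa using hp.length_eq
  have hfil := (hp.filter (fun x => decide (x ∉ lamL))).length_eq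
  have h2 : ((x :: ns).filter (fun x => decide (x ∉ lamL))).length
      ≥ (ns.filter (fun x => decide (x ∉ lamL))).length := by
    rw [List.filter_cons]; split <;> simp
  unfold muStmt16; omega

/-- Uniqueness of the coefficients: two skew-symmetric families satisfying
`ξ_λ = 1`, `ξ_μ = 0` for `|μ| < |λ|`, the relations (A) and (B), and agreeing on
the initial data `ξ_{(λ_1,…,λ̂_i,…,λ_{2L-1},n)}` (`n > λ_i`),
`ξ_{(λ_1,…,λ_{2L-1},n)}` and `ξ_{(λ_1,…,λ_{2L-1},n_1,n_2)}`, agree on all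
sequences of distinct positive integers. -/
theorem stmt16 {R : Type*} [CommRing R] (L : ℕ) (hL : 1 ≤ L)
    (lam : Fin (2*L-1) → ℕ)
    (hlam : ∀ i j : Fin (2*L-1), i < j → lam j < lam i) (hlampos : ∀ i, 1 ≤ lam i)
    (ξ ξ' : List ℕ → R) (hs : SkewCoeff ξ) (hs' : SkewCoeff ξ')
    (h1 : ξ (List.ofFn lam) = 1) (h1' : ξ' (List.ofFn lam) = 1)
    (h0 : ∀ l : List ℕ, l.Nodup → l.sum < ∑ i, lam i → ξ l = 0)
    (h0' : ∀ l : List ℕ, l.Nodup → l.sum < ∑ i, lam i → ξ' l = 0)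
    (hA : RelA L lam ξ) (hB : RelB L lam ξ)
    (hA' : RelA L lam ξ') (hB' : RelB L lam ξ')
    (e1 : ∀ (i : Fin (2*L-1)) (n : ℕ), lam i < n →
      ξ ((List.ofFn lam).eraseIdx i ++ [n]) = ξ' ((List.ofFn lam).eraseIdx i ++ [n]))
    (e2 : ∀ n : ℕ, 0 < n → ξ (List.ofFn lam ++ [n]) = ξ' (List.ofFn lam ++ [n]))
    (e3 : ∀ n1 n2 : ℕ, 0 < n2 → n2 < n1 →
      ξ (List.ofFn lam ++ [n1, n2]) = ξ' (List.ofFn lam ++ [n1, n2])) :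
    ∀ ns : List ℕ, ns.Nodup → (∀ x ∈ ns, 0 < x) → ξ ns = ξ' ns := by
  classical
  set lamL := List.ofFn lam with hlamLdef
  -- basic facts about lamL
  have laminj : Function.Injective lam := by
    intro i j hij
    by_contra hne
    rcases lt_or_gt_of_ne hne with h | h
    · have := hlam i j h; omega
    · have := hlam j i h; omega
  have lamN : lamL.Nodup := List.nodup_ofFn.mpr laminj
  have lamlen : lamL.length = 2*L-1 := List.length_ofFn
  have lammem : ∀ x : ℕ, x ∈ lamL ↔ ∃ i, lam i = x := by
    intro x; rw [hlamLdef, List.mem_ofFn]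
  have lampos : ∀ x ∈ lamL, 0 < x := by
    intro x hx
    obtain ⟨i, rfl⟩ := (lammem x).mp hx
    exact hlampos i
  have lamsum : lamL.sum = ∑ i, lam i := List.sum_ofFn
  have hFnonempty : (0 : ℕ) < 2*L-1 := by omega
  have lamsumpos : 0 < ∑ i, lam i :=
    Finset.sum_pos (fun i _ => hlampos i) ⟨⟨0, hFnonempty⟩, Finset.mem_univ _⟩
  -- perm of lamL with element i pulled to the front
  have hperm_i : ∀ i : Fin (2*L-1), lamL.Perm (lam i :: lamL.eraseIdx i) := by
    intro i
    have hi : (i : ℕ) < lamL.length := by rw [lamlen]; exact i.isLt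
    have hget : lamL[(i:ℕ)]'hi = lam i := getElem_ofFn' lam i hi
    have hmem : lam i ∈ lamL := (lammem _).mpr ⟨i, rfl⟩
    have := List.perm_cons_erase hmem
    refine this.trans (List.Perm.cons _ ?_)
    rw [← hget]
    exact List.erase_getElem hi
  have lamsum_erase : ∀ i : Fin (2*L-1), lam i + (lamL.eraseIdx (i:ℕ)).sum = ∑ j, lam j := by
    intro i
    have := (hperm_i i).sum_eq
    simp only [List.sum_cons] at this
    omega
  -- the "empty/small" vanishing lemma
  have Csub : ∀ m : List ℕ, m.Nodup → (∀ x ∈ m, x ∈ lamL) → m.length < 2*L-1 →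
      m.sum < ∑ i, lam i := by
    intro m hnd hsub hlt
    have hsubF : m.toFinset ⊆ lamL.toFinset := by
      intro y hy
      rw [List.mem_toFinset] at hy ⊢
      exact hsub y hy
    have hcard : m.toFinset.card < lamL.toFinset.card := by
      rw [List.toFinset_card_of_nodup hnd, List.toFinset_card_of_nodup lamN, lamlen]
      exact hlt
    have hex : ∃ y ∈ lamL.toFinset, y ∉ m.toFinset := by
      by_contra hno
      push_neg at hno
      exact absurd (Finset.card_le_card hno) (by omega)
    obtain ⟨y, hy1, hy2⟩ := hex
    have hsum1 : ∑ j ∈ m.toFinset, j = m.sum := by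
      have := List.sum_toFinset (fun x => x) hnd
      simpa using this
    have hsum2 : ∑ j ∈ lamL.toFinset, j = ∑ i, lam i := by
      have := List.sum_toFinset (fun x => x) lamN
      simpa [lamsum] using this
    have := Finset.sum_lt_sum_of_subset hsubF hy1 hy2
      (lampos y (List.mem_toFinset.mp hy1)) (fun j _ _ => Nat.zero_le j)
    rw [hsum1, hsum2] at this
    exact this
  -- value on permutations of lamL
  have Cperm : ∀ m : List ℕ, m.Perm lamL → ξ m = ξ' m := by
    intro m hp
    exact perm_transfer hs hs' hp (by rw [h1, h1'])
  -- coefficient lemma for relation A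
  have C2 : ∀ n : ℕ, 0 < n → ξ (n :: lamL) = ξ' (n :: lamL) := by
    intro n hn
    by_cases hmem : n ∈ lamL
    · have hnodup : ¬ (n :: lamL).Nodup := by simp [List.nodup_cons, hmem]
      rw [hs.2 _ hnodup, hs'.2 _ hnodup]
    · exact perm_transfer hs hs' (List.perm_append_singleton n lamL).symm (e2 n hn)
  -- coefficient lemma for the first sum in relation B
  have C3 : ∀ a b : ℕ, 0 < a → 0 < b → a ≠ b →
      ξ (a :: b :: lamL) = ξ' (a :: b :: lamL) := by
    intro a b ha hb hab
    by_cases hal : a ∈ lamL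
    · have hnodup : ¬ (a :: b :: lamL).Nodup := by
        simp [List.nodup_cons]; tauto
      rw [hs.2 _ hnodup, hs'.2 _ hnodup]
    by_cases hbl : b ∈ lamL
    · have hnodup : ¬ (a :: b :: lamL).Nodup := by
        simp [List.nodup_cons]; tauto
      rw [hs.2 _ hnodup, hs'.2 _ hnodup]
    rcases lt_or_gt_of_ne hab with h | h
    · -- a < b : target lamL ++ [b, a]
      have hp : (a :: b :: lamL).Perm (lamL ++ [b, a]) := by
        refine (List.Perm.swap b a lamL).trans ?_
        exact (List.perm_append_comm (l₁ := [b, a]) (l₂ := lamL))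
      exact perm_transfer hs hs' hp (e3 b a ha h)
    · have hp : (a :: b :: lamL).Perm (lamL ++ [a, b]) :=
        List.perm_append_comm (l₁ := [a, b]) (l₂ := lamL)
      exact perm_transfer hs hs' hp (e3 a b hb h)
  -- coefficient lemma for the second sum in relation B
  have C1 : ∀ (i : Fin (2*L-1)) (n : ℕ), 0 < n → n ∉ lamL →
      ξ (n :: lamL.eraseIdx (i:ℕ)) = ξ' (n :: lamL.eraseIdx (i:ℕ)) := by
    intro i n hn hnl
    have hsub : (lamL.eraseIdx (i:ℕ)).Sublist lamL := lamL.eraseIdx_sublist _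
    rcases lt_trichotomy (lam i) n with h | h | h
    · exact perm_transfer hs hs'
        (List.perm_append_singleton n (lamL.eraseIdx (i:ℕ))).symm (e1 i n h)
    · exact absurd ((lammem n).mpr ⟨i, h⟩) hnl
    · have hnd : (n :: lamL.eraseIdx (i:ℕ)).Nodup := by
        rw [List.nodup_cons]
        exact ⟨fun hmem => hnl (hsub.mem hmem), hsub.nodup lamN⟩
      have hsum : (n :: lamL.eraseIdx (i:ℕ)).sum < ∑ j, lam j := by
        have := lamsum_erase i
        simp only [List.sum_cons]
        omega
      rw [h0 _ hnd hsum, h0' _ hnd hsum]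
  -- main induction on the measure
  suffices H : ∀ N : ℕ, ∀ m : List ℕ, muStmt16 lamL m ≤ N → m.Nodup →
      (∀ x ∈ m, 0 < x) → ξ m = ξ' m by
    intro ns hnd hpos
    exact H (muStmt16 lamL ns) ns le_rfl hnd hpos
  intro N
  induction N with
  | zero =>
    intro m hm _ _
    have : m.length = 0 := by unfold muStmt16 at hm; omega
    rw [List.length_eq_zero_iff] at this
    subst this
    rw [h0 [] List.nodup_nil (by simpa using lamsumpos),
        h0' [] List.nodup_nil (by simpa using lamsumpos)]
  | succ N IH =>
    intro m hm hnd hpos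
    rcases Nat.even_or_odd m.length with he | ho
    · -- even length: relation A
      by_cases hne : m = []
      · subst hne
        rw [h0 [] List.nodup_nil (by simpa using lamsumpos),
            h0' [] List.nodup_nil (by simpa using lamsumpos)]
      · rw [hA m hnd hpos he hne, hA' m hnd hpos he hne]
        simp only [← hlamLdef]
        refine Finset.sum_congr rfl ?_
        intro i _
        have hIH : ξ (m.eraseIdx (i:ℕ)) = ξ' (m.eraseIdx (i:ℕ)) := by
          refine IH _ ?_ ((m.eraseIdx_sublist (i:ℕ)).nodup hnd)
            (fun x hx => hpos x ((m.eraseIdx_sublist (i:ℕ)).mem hx))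
          have := muStmt16_eraseIdx (lamL := lamL) (i:ℕ) i.isLt (m := m)
          omega
        rw [hIH, C2 (m.get i) (hpos _ (List.get_mem m i))]
    · -- odd length
      by_cases hex : ∃ x ∈ m, x ∉ lamL
      · obtain ⟨x, hxm, hxl⟩ := hex
        set ns := m.erase x with hnsdef
        have hp0 : m.Perm (x :: ns) := List.perm_cons_erase hxm
        have hp : m.Perm (ns ++ [x]) := hp0.trans (List.perm_append_singleton x ns).symm
        refine perm_transfer hs hs' hp ?_
        have hnd2 : (ns ++ [x]).Nodup := hp.nodup_iff.mp hnd
        have hpos2 : ∀ y ∈ ns ++ [x], 0 < y := fun y hy => hpos y (hp.mem_iff.mpr hy)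
        have hlen : ns.length + 1 = m.length := by
          have := hp.length_eq; simp at this; omega
        have hlen2 : Even ns.length := by
          obtain ⟨k, hk⟩ := ho
          exact ⟨k, by omega⟩
        have hxns : x ∉ ns := by
          have := hnd2
          rw [List.nodup_append'] at this
          exact fun hc => this.2.2 hc (by simp)
        have hnsnd : ns.Nodup := (List.nodup_append.mp hnd2).1
        rw [hB ns x hnd2 hpos2 hlen2, hB' ns x hnd2 hpos2 hlen2]
        simp only [← hlamLdef]
        congr 1
        · refine Finset.sum_congr rfl ?_
          intro i _
          have hIH : ξ (ns.eraseIdx (i:ℕ)) = ξ' (ns.eraseIdx (i:ℕ)) := by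
            refine IH _ ?_ ((ns.eraseIdx_sublist (i:ℕ)).nodup hnsnd)
              (fun y hy => hpos2 y (List.mem_append_left _ ((ns.eraseIdx_sublist (i:ℕ)).mem hy)))
            have h1' : muStmt16 lamL (ns.eraseIdx (i:ℕ)) < muStmt16 lamL ns :=
              muStmt16_eraseIdx (i:ℕ) i.isLt
            have h2' : muStmt16 lamL ns < muStmt16 lamL m := muStmt16_tail hp0
            omega
          have hC : ξ (ns.get i :: x :: lamL) = ξ' (ns.get i :: x :: lamL) := by
            have hgm : ns.get i ∈ ns := List.get_mem ns i
            exact C3 _ _ (hpos2 _ (List.mem_append_left _ hgm))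
              (hpos x hxm) (fun hc => hxns (hc ▸ hgm))
          rw [hIH, hC]
        · refine Finset.sum_congr rfl ?_
          intro i _
          have hC : ξ (x :: lamL.eraseIdx (i:ℕ)) = ξ' (x :: lamL.eraseIdx (i:ℕ)) :=
            C1 i x (hpos x hxm) hxl
          by_cases hli : lam i ∈ ns
          · have hnodup : ¬ (ns ++ [lam i]).Nodup := fun h =>
              (List.nodup_append'.mp h).2.2 hli (List.mem_singleton_self _)
            rw [hs.2 _ hnodup, hs'.2 _ hnodup, hC]
          · have hIH : ξ (ns ++ [lam i]) = ξ' (ns ++ [lam i]) := by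
              refine IH _ ?_ ?_ ?_
              · have := muStmt16_swap (lamL := lamL) hxl ((lammem _).mpr ⟨i, rfl⟩) hp0
                omega
              · rw [List.nodup_append']
                refine ⟨hnsnd, List.nodup_singleton _, ?_⟩
                intro a ha hb
                rw [List.mem_singleton] at hb
                subst hb
                exact hli ha
              · intro y hy
                rcases List.mem_append.mp hy with h | h
                · exact hpos2 y (List.mem_append_left _ h)
                · simp at h; subst h; exact hlampos i
            rw [hIH, hC]
      · -- all elements of m lie in lamL
        push_neg at hex
        have hsubF : m.toFinset ⊆ lamL.toFinset := by
          intro y hy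
          rw [List.mem_toFinset] at hy ⊢
          exact hex y hy
        have hmlen : m.length ≤ 2*L-1 := by
          have := Finset.card_le_card hsubF
          rw [List.toFinset_card_of_nodup hnd, List.toFinset_card_of_nodup lamN, lamlen] at this
          exact this
        rcases lt_or_eq_of_le hmlen with hlt | heq
        · rw [h0 m hnd (Csub m hnd hex hlt), h0' m hnd (Csub m hnd hex hlt)]
        · have hcards : m.toFinset = lamL.toFinset := by
            apply Finset.eq_of_subset_of_card_le hsubF
            rw [List.toFinset_card_of_nodup hnd, List.toFinset_card_of_nodup lamN, lamlen, heq]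
          exact Cperm m (List.perm_of_nodup_nodup_toFinset_eq hnd lamN hcards)
end

section
/- Vanishing below the threshold: let λ = (λ_1 > ··· > λ_{2L-1} ≥ 1), L ≥ 2, and suppose skew-symmetric coefficients ξ satisfy ξ_μ = 0 for |μ| < |λ|, ξ_λ = 1, and the relations (A) and (B) of the BKP addition formulae with respect to λ (as in the uniqueness statement). Then for every l < 2L-1 and all distinct positive integers n_1,...,n_l, ξ_{(n_1,...,n_l)} = 0. -/
lemma sum_eraseIdx_aux (l : List ℕ) (i : ℕ) (h : i < l.length) :
    (l.eraseIdx i).sum + l.get ⟨i, h⟩ = l.sum := by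
  induction l generalizing i with
  | nil => simp at h
  | cons a t ih =>
    cases i with
    | zero => simp [Nat.add_comm]
    | succ j =>
      simp only [List.eraseIdx, List.sum_cons, List.get]
      have := ih j (by simpa using h)
      omega

lemma sign_move_aux {R : Type*} [CommRing R] (ξ : List ℕ → R)
    (hsw : ∀ (l1 l2 : List ℕ) (a b : ℕ), ξ (l1 ++ a :: b :: l2) = - ξ (l1 ++ b :: a :: l2)) :
    ∀ (l2 l1 : List ℕ) (x : ℕ),
      ξ (l1 ++ x :: l2) = (-1 : R) ^ l2.length * ξ ((l1 ++ l2) ++ [x]) := by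
  intro l2
  induction l2 with
  | nil => intro l1 x; simp
  | cons b t ih =>
    intro l1 x
    rw [hsw l1 t x b]
    have := ih (l1 ++ [b]) x
    simp only [List.append_assoc, List.singleton_append] at this
    rw [this]
    simp [pow_succ]

/-- Vanishing below the threshold: if `λ = (λ_1 > ⋯ > λ_{2L-1} ≥ 1)`, `L ≥ 2`,
and a skew-symmetric family `ξ` satisfies `ξ_μ = 0` for `|μ| < |λ|`, `ξ_λ = 1`
and the relations (A) and (B), then `ξ_{(n_1,…,n_l)} = 0` for every `l < 2L-1`
and all distinct positive integers `n_1,…,n_l`. -/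
theorem stmt17 {R : Type*} [CommRing R] (L : ℕ) (hL : 2 ≤ L)
    (lam : Fin (2*L-1) → ℕ)
    (hlam : ∀ i j : Fin (2*L-1), i < j → lam j < lam i) (hlampos : ∀ i, 1 ≤ lam i)
    (ξ : List ℕ → R) (hs : SkewCoeff ξ)
    (h1 : ξ (List.ofFn lam) = 1)
    (h0 : ∀ l : List ℕ, l.Nodup → l.sum < ∑ i, lam i → ξ l = 0)
    (hA : RelA L lam ξ) (hB : RelB L lam ξ) :
    ∀ ns : List ℕ, ns.length < 2*L-1 → ns.Nodup → (∀ x ∈ ns, 0 < x) → ξ ns = 0 := by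
  -- basic facts about lam
  have hlaminj : Function.Injective lam := by
    intro i j hij
    rcases lt_trichotomy i j with h | h | h
    · exact absurd hij (by have := hlam i j h; omega)
    · exact h
    · exact absurd hij (by have := hlam j i h; omega)
  have hlen : (List.ofFn lam).length = 2*L-1 := by simp
  have hLpos : 0 < 2*L-1 := by omega
  have hsumpos : 0 < ∑ i, lam i := by
    apply Finset.sum_pos (fun i _ => hlampos i)
    exact ⟨⟨0, hLpos⟩, Finset.mem_univ _⟩
  -- main induction on an upper bound for the sum
  suffices H : ∀ s : ℕ, ∀ ns : List ℕ, ns.sum ≤ s → ns.length < 2*L-1 → ns.Nodup →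
      (∀ x ∈ ns, 0 < x) → ξ ns = 0 by
    intro ns hl hnd hpos
    exact H ns.sum ns le_rfl hl hnd hpos
  intro s
  induction s with
  | zero =>
    intro ns hsum _ hnd hpos
    have : ns = [] := by
      cases ns with
      | nil => rfl
      | cons a t => exact absurd (hpos a (by simp)) (by have : a + t.sum ≤ 0 := hsum; omega)
    subst this
    exact h0 [] (by simp) (by simpa using hsumpos)
  | succ s ih =>
    intro ns hsum hl hnd hpos
    rcases Nat.even_or_odd ns.length with hev | hodd
    · -- even length
      rcases eq_or_ne ns [] with rfl | hne
      · exact h0 [] (by simp) (by simpa using hsumpos)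
      rw [hA ns hnd hpos hev hne]
      apply Finset.sum_eq_zero
      intro i _
      have hsub : List.Sublist (ns.eraseIdx i) ns := List.eraseIdx_sublist ns i
      have hzero : ξ (ns.eraseIdx i) = 0 := by
        apply ih
        · have := sum_eraseIdx_aux ns i i.isLt
          have h2 := hpos _ (ns.get_mem ⟨i, i.isLt⟩)
          omega
        · rw [List.length_eraseIdx]; simp [i.isLt]; omega
        · exact hsub.nodup hnd
        · exact fun x hx => hpos x (hsub.subset hx)
      rw [hzero, mul_zero]
    · -- odd length
      by_cases hall : ∀ x ∈ ns, x ∈ List.ofFn lam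
      · -- all entries are values of lam : sum below threshold
        apply h0 ns hnd
        have hsubset : ns.toFinset ⊆ Finset.univ.image lam := by
          intro x hx
          rcases List.mem_ofFn.mp (hall x (List.mem_toFinset.mp hx)) with ⟨i, hi⟩
          exact Finset.mem_image.mpr ⟨i, Finset.mem_univ _, hi⟩
        have hcard : ns.toFinset.card < (Finset.univ.image lam).card := by
          rw [List.toFinset_card_of_nodup hnd, Finset.card_image_of_injective _ hlaminj]
          simpa using hl
        obtain ⟨y, hyt, hys⟩ := (Finset.ssubset_iff_of_subset hsubset).mp
          (hsubset.ssubset_of_ne (fun e => by rw [e] at hcard; omega))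
        have hns : ns.sum = ∑ x ∈ ns.toFinset, x := by
          rw [List.sum_toFinset _ hnd]; simp
        have hlamsum : ∑ x ∈ Finset.univ.image lam, x = ∑ i, lam i :=
          Finset.sum_image (fun i _ j _ h => hlaminj h)
        rw [hns, ← hlamsum]
        apply Finset.sum_lt_sum_of_subset hsubset hyt hys
        · rcases Finset.mem_image.mp hyt with ⟨i, _, rfl⟩
          exact hlampos i
        · intro j _ _; exact Nat.zero_le j
      · -- some entry x is not a value of lam
        push_neg at hall
        obtain ⟨x, hxmem, hxnot⟩ := hall
        obtain ⟨l1, l2, rfl⟩ := List.append_of_mem hxmem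
        set ms := l1 ++ l2 with hms
        -- move x to the end
        rw [sign_move_aux ξ hs.1 l2 l1 x]
        have hperm : (ms ++ [x]).Perm (l1 ++ x :: l2) :=
          (List.perm_append_singleton x ms).trans List.perm_middle.symm
        have hndm : (ms ++ [x]).Nodup := hperm.nodup_iff.mpr hnd
        have hposm : ∀ y ∈ ms ++ [x], 0 < y := fun y hy => hpos y (hperm.mem_iff.mp hy)
        have hlenms : ms.length + 1 = (l1 ++ x :: l2).length := by simp [hms]; omega
        have hevm : Even ms.length := by
          rcases hodd with ⟨k, hk⟩
          exact ⟨k, by omega⟩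
        have hsums : ms.sum + x = (l1 ++ x :: l2).sum := by simp [hms]; omega
        have hxpos : 0 < x := hpos x hxmem
        rw [hB ms x hndm hposm hevm]
        have hS1 : (∑ i : Fin ms.length,
            (-1 : R) ^ ((i : ℕ) + 1) * ξ (ms.get i :: x :: List.ofFn lam) * ξ (ms.eraseIdx i)) = 0 := by
          apply Finset.sum_eq_zero
          intro i _
          have hsub : List.Sublist (ms.eraseIdx i) ms := List.eraseIdx_sublist ms i
          have hzero : ξ (ms.eraseIdx i) = 0 := by
            apply ih
            · have := sum_eraseIdx_aux ms i i.isLt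
              have h1 := hposm (ms.get i) (by simp [ms.get_mem i])
              omega
            · rw [List.length_eraseIdx]; simp [i.isLt]; omega
            · exact hsub.nodup (List.Nodup.sublist (List.sublist_append_left ms [x]) hndm)
            · exact fun y hy => hposm y (by simp [hsub.subset hy])
          rw [hzero, mul_zero]
        have hS2 : (∑ i : Fin (2*L-1),
            (-1 : R) ^ (i : ℕ) * ξ (x :: (List.ofFn lam).eraseIdx i) * ξ (ms ++ [lam i])) = 0 := by
          apply Finset.sum_eq_zero
          intro i _
          have hilt : (i : ℕ) < (List.ofFn lam).length := by rw [hlen]; exact i.isLt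
          have hxne : x ≠ lam i := fun e => hxnot (by rw [e]; exact List.mem_ofFn.mpr ⟨i, rfl⟩)
          rcases lt_or_gt_of_ne hxne with hxl | hxl
          · -- x < lam i : first factor vanishes by h0
            have hsube : List.Sublist ((List.ofFn lam).eraseIdx i) (List.ofFn lam) := List.eraseIdx_sublist _ i
            have hnd1 : (x :: (List.ofFn lam).eraseIdx i).Nodup := by
              refine List.nodup_cons.mpr ⟨fun hx => hxnot (hsube.subset hx), ?_⟩
              exact hsube.nodup (List.nodup_ofFn.mpr hlaminj)
            have hgeteq : (List.ofFn lam).get ⟨i, hilt⟩ = lam i := by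
              rw [List.get_ofFn]; congr 1
            have hsum1 : (x :: (List.ofFn lam).eraseIdx i).sum < ∑ j, lam j := by
              have := sum_eraseIdx_aux (List.ofFn lam) i hilt
              rw [hgeteq, List.sum_ofFn] at this
              simp only [List.sum_cons]
              omega
            rw [h0 _ hnd1 hsum1, mul_zero, zero_mul]
          · -- lam i < x : second factor vanishes
            have hzero : ξ (ms ++ [lam i]) = 0 := by
              by_cases hmem : lam i ∈ ms
              · apply hs.2
                intro hcon
                rcases List.nodup_append'.mp hcon with ⟨_, _, hdis⟩
                exact hdis hmem (by simp)
              · apply ih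
                · simp only [List.sum_append, List.sum_cons, List.sum_nil]
                  omega
                · simp only [List.length_append, List.length_singleton]
                  omega
                · refine List.nodup_append'.mpr
                    ⟨List.Nodup.sublist (List.sublist_append_left ms [x]) hndm, by simp, ?_⟩
                  intro y hy
                  simp only [List.mem_singleton]
                  rintro rfl
                  exact hmem hy
                · intro y hy
                  rcases List.mem_append.mp hy with hy | hy
                  · exact hposm y (by simp [hy])
                  · simp only [List.mem_singleton] at hy; subst hy; exact hlampos i
            rw [hzero, mul_zero]
        rw [hS1, hS2, add_zero, mul_zero]
end
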